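/- arXiv:1704.05257 — 9 statements merged into one kernel-verified Lean document; each statement's English description precedes it below -/
import Mathlib

section
/- Let G be a connected graph that is not complete, and let e be an edge not in G. Then the hyper-Wiener index of G+e is strictly less than that of G. -/
open Finset
open scoped Classical

/-- Wiener index: sum of distances over unordered pairs of vertices. -/
noncomputable def wiener {V : Type*} [Fintype V] (G : SimpleGraph V) : ℚ :=
  (1/2) * ∑ u : V, ∑ v : V, (G.dist u v : ℚ)

/-- Harary index: sum of reciprocal distances over unordered pairs of distinct vertices. -/
noncomputable def harary {V : Type*} [Fintype V] (G : SimpleGraph V) : ℚ :=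
  (1/2) * ∑ p ∈ Finset.univ.offDiag, (1 : ℚ) / (G.dist p.1 p.2 : ℚ)

/-- Hyper-Wiener index: (1/2) Σ_{unordered pairs} (d + d²). -/
noncomputable def hyperWiener {V : Type*} [Fintype V] (G : SimpleGraph V) : ℚ :=
  (1/4) * ∑ u : V, ∑ v : V, ((G.dist u v : ℚ) + (G.dist u v : ℚ)^2)

/-- Eccentricity of a vertex: maximum distance to any other vertex. -/
noncomputable def ecc {V : Type*} [Fintype V] (G : SimpleGraph V) (u : V) : ℕ :=
  Finset.univ.sup (fun v => G.dist u v)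

/-- Connective eccentricity index: Σ_u deg(u)/ε(u). -/
noncomputable def cei {V : Type*} [Fintype V] (G : SimpleGraph V) : ℚ :=
  ∑ u : V, (G.degree u : ℚ) / (ecc G u : ℚ)

/-- Eccentricity distance sum: Σ_u ε(u)·D(u). -/
noncomputable def eds {V : Type*} [Fintype V] (G : SimpleGraph V) : ℚ :=
  ∑ u : V, (ecc G u : ℚ) * ∑ v : V, (G.dist u v : ℚ)

/-- Adding an edge between nonadjacent vertices of a connected non-complete graph
strictly decreases the hyper-Wiener index. -/
theorem hyperWiener_add_edge_lt {V : Type*} [Fintype V] (G : SimpleGraph V)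
    (hconn : G.Connected) (hG : G ≠ ⊤) (u v : V) (hne : u ≠ v) (hadj : ¬ G.Adj u v) :
    hyperWiener (G ⊔ SimpleGraph.fromEdgeSet {s(u, v)}) < hyperWiener G := by
  set G' := G ⊔ SimpleGraph.fromEdgeSet {s(u, v)} with hG'
  have hle : G ≤ G' := le_sup_left
  have hdist : ∀ a b : V, G'.dist a b ≤ G.dist a b := fun a b =>
    ((hconn a b)).dist_anti hle
  have hadj' : G'.Adj u v := by
    right
    simp [SimpleGraph.fromEdgeSet_adj, hne]
  have h1 : G'.dist u v = 1 := (SimpleGraph.dist_eq_one_iff_adj).mpr hadj'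
  have h2 : 2 ≤ G.dist u v := by
    have h0 : G.dist u v ≠ 0 := fun h0 =>
      hne ((SimpleGraph.Connected.dist_eq_zero_iff hconn).mp h0)
    have h1' : G.dist u v ≠ 1 := fun h => hadj (SimpleGraph.dist_eq_one_iff_adj.mp h)
    omega
  have key : ∑ p ∈ (Finset.univ ×ˢ Finset.univ : Finset (V × V)),
      ((G'.dist p.1 p.2 : ℚ) + (G'.dist p.1 p.2 : ℚ)^2) <
      ∑ p ∈ (Finset.univ ×ˢ Finset.univ : Finset (V × V)),
      ((G.dist p.1 p.2 : ℚ) + (G.dist p.1 p.2 : ℚ)^2) := by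
    apply Finset.sum_lt_sum
    · intro p _
      have hd := hdist p.1 p.2
      have hdq : (G'.dist p.1 p.2 : ℚ) ≤ (G.dist p.1 p.2 : ℚ) := by exact_mod_cast hd
      have h0' : (0:ℚ) ≤ (G'.dist p.1 p.2 : ℚ) := by positivity
      nlinarith
    · refine ⟨(u, v), Finset.mem_product.mpr ⟨Finset.mem_univ _, Finset.mem_univ _⟩, ?_⟩
      have e1 : (G'.dist u v : ℚ) = 1 := by rw [h1]; norm_num
      rw [e1]
      have hdq : (2:ℚ) ≤ (G.dist u v : ℚ) := by exact_mod_cast h2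
      nlinarith
  unfold hyperWiener
  rw [show (∑ a : V, ∑ b : V, ((G'.dist a b : ℚ) + (G'.dist a b : ℚ)^2)) =
      ∑ p ∈ (Finset.univ ×ˢ Finset.univ : Finset (V × V)),
      ((G'.dist p.1 p.2 : ℚ) + (G'.dist p.1 p.2 : ℚ)^2) from (Finset.sum_product' ..).symm,
    show (∑ a : V, ∑ b : V, ((G.dist a b : ℚ) + (G.dist a b : ℚ)^2)) =
      ∑ p ∈ (Finset.univ ×ˢ Finset.univ : Finset (V × V)),
      ((G.dist p.1 p.2 : ℚ) + (G.dist p.1 p.2 : ℚ)^2) from (Finset.sum_product' ..).symm]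
  linarith
end

section
/- Let G be a connected graph that is not complete, and let e be an edge not in G. Then the connective eccentricity index of G+e is strictly greater than that of G. -/
open Finset
open scoped Classical

/-- Adding an edge between nonadjacent vertices of a connected non-complete graph
strictly increases the connective eccentricity index. -/
theorem cei_add_edge_gt {V : Type*} [Fintype V] (G : SimpleGraph V)
    (hconn : G.Connected) (hG : G ≠ ⊤) (u v : V) (hne : u ≠ v) (hadj : ¬ G.Adj u v) :
    cei (G ⊔ SimpleGraph.fromEdgeSet {s(u, v)}) > cei G := by
  set G' := G ⊔ SimpleGraph.fromEdgeSet {s(u, v)} with hG'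
  have hle : G ≤ G' := le_sup_left
  -- eccentricities are positive
  have heccpos : ∀ w : V, 0 < ecc G w := by
    intro w
    obtain ⟨x, hx⟩ : ∃ x : V, x ≠ w := by
      by_cases h : u = w
      · exact ⟨v, fun hv => hne (h.trans hv.symm)⟩
      · exact ⟨u, h⟩
    have := hconn.pos_dist_of_ne (Ne.symm hx)
    exact lt_of_lt_of_le this (Finset.le_sup (mem_univ x))
  have hecc'pos : ∀ w : V, 0 < ecc G' w := by
    intro w
    obtain ⟨x, hx⟩ : ∃ x : V, x ≠ w := by
      by_cases h : u = w
      · exact ⟨v, fun hv => hne (h.trans hv.symm)⟩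
      · exact ⟨u, h⟩
    have hconn' : G'.Connected := hconn.mono hle
    have := hconn'.pos_dist_of_ne (Ne.symm hx)
    exact lt_of_lt_of_le this (Finset.le_sup (mem_univ x))
  -- eccentricity does not increase
  have hecc : ∀ w : V, ecc G' w ≤ ecc G w := by
    intro w
    apply Finset.sup_le
    intro x _
    exact le_trans ((hconn.1 w x).dist_anti hle) (Finset.le_sup (mem_univ x))
  -- degrees do not decrease
  have hdeg : ∀ w : V, G.degree w ≤ G'.degree w := by
    intro w
    apply Finset.card_le_card
    intro y hy
    rw [SimpleGraph.mem_neighborFinset] at *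
    exact hle hy
  -- degree at u strictly increases
  have hdegu : G.degree u < G'.degree u := by
    apply Finset.card_lt_card
    constructor
    · intro y hy
      rw [SimpleGraph.mem_neighborFinset] at *
      exact hle hy
    · intro hsub
      have : v ∈ G.neighborFinset u := by
        apply hsub
        rw [SimpleGraph.mem_neighborFinset]
        exact Or.inr ⟨by simp, hne⟩
      rw [SimpleGraph.mem_neighborFinset] at this
      exact hadj this
  unfold cei
  apply Finset.sum_lt_sum (f := fun w => (G.degree w : ℚ) / (ecc G w : ℚ))
  · intro w _
    have key : (G.degree w : ℚ) / (ecc G w : ℚ) ≤ (G'.degree w : ℚ) / (ecc G' w : ℚ) :=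
      div_le_div₀ (Nat.cast_nonneg _) (Nat.cast_le.mpr (hdeg w))
        (by exact_mod_cast hecc'pos w) (Nat.cast_le.mpr (hecc w))
    convert key using 4
    rfl
  · refine ⟨u, mem_univ u, ?_⟩
    have key : (G.degree u : ℚ) / (ecc G u : ℚ) < (G'.degree u : ℚ) / (ecc G' u : ℚ) :=
      div_lt_div₀ (Nat.cast_lt.mpr hdegu) (Nat.cast_le.mpr (hecc u))
        (Nat.cast_nonneg _) (by exact_mod_cast hecc'pos u)
    convert key using 4
    rfl
end

section
/- Let G be a connected graph that is not complete, and let e be an edge not in G. Then the eccentricity distance sum of G+e is strictly less than that of G. -/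
open Finset
open scoped Classical

/-- Adding an edge between nonadjacent vertices of a connected non-complete graph
strictly decreases the eccentricity distance sum. -/
theorem eds_add_edge_lt {V : Type*} [Fintype V] (G : SimpleGraph V)
    (hconn : G.Connected) (hG : G ≠ ⊤) (u v : V) (hne : u ≠ v) (hadj : ¬ G.Adj u v) :
    eds (G ⊔ SimpleGraph.fromEdgeSet {s(u, v)}) < eds G := by
  set G' := G ⊔ SimpleGraph.fromEdgeSet {s(u, v)} with hG'
  have hle : G ≤ G' := le_sup_left
  have hdist : ∀ a b, G'.dist a b ≤ G.dist a b := by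
    intro a b
    obtain ⟨p, hp⟩ := (hconn a b).exists_walk_length_eq_dist
    calc G'.dist a b ≤ (p.mapLe hle).length := SimpleGraph.dist_le _
      _ = G.dist a b := by simpa using hp
  have hecc : ∀ a, ecc G' a ≤ ecc G a := by
    intro a
    exact Finset.sup_mono_fun fun b _ => hdist a b
  have hadj' : G'.Adj u v := by
    simp [hG', SimpleGraph.fromEdgeSet_adj, hne]
  have hd1 : G'.dist u v = 1 := SimpleGraph.dist_eq_one_iff_adj.mpr hadj'
  have hdpos : G.dist u v ≠ 0 := by
    intro h
    rcases SimpleGraph.dist_eq_zero_iff_eq_or_not_reachable.mp h with h | h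
    · exact hne h
    · exact h (hconn u v)
  have hd2 : 2 ≤ G.dist u v := by
    have h1 : G.dist u v ≠ 1 := fun h => hadj (SimpleGraph.dist_eq_one_iff_adj.mp h)
    omega
  have hDle : ∀ a, ∑ b : V, (G'.dist a b : ℚ) ≤ ∑ b : V, (G.dist a b : ℚ) := by
    intro a
    exact Finset.sum_le_sum fun b _ => by exact_mod_cast hdist a b
  have hDnonneg : ∀ a, (0:ℚ) ≤ ∑ b : V, (G'.dist a b : ℚ) :=
    fun a => Finset.sum_nonneg fun b _ => by positivity
  have hDlt : ∑ b : V, (G'.dist u b : ℚ) < ∑ b : V, (G.dist u b : ℚ) := by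
    apply Finset.sum_lt_sum (fun b _ => by exact_mod_cast hdist u b) ⟨v, Finset.mem_univ v, ?_⟩
    rw [hd1]
    exact_mod_cast lt_of_lt_of_le one_lt_two hd2
  have heccpos : (0:ℚ) < ecc G u := by
    have : 2 ≤ ecc G u := le_trans hd2 (Finset.le_sup (Finset.mem_univ v))
    exact_mod_cast lt_of_lt_of_le Nat.zero_lt_two (by exact_mod_cast this)
  apply Finset.sum_lt_sum
  · intro a _
    exact mul_le_mul (by exact_mod_cast hecc a) (hDle a) (hDnonneg a) (by positivity)
  · refine ⟨u, Finset.mem_univ u, ?_⟩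
    calc (ecc G' u : ℚ) * ∑ b : V, (G'.dist u b : ℚ)
        ≤ (ecc G u : ℚ) * ∑ b : V, (G'.dist u b : ℚ) :=
          mul_le_mul_of_nonneg_right (by exact_mod_cast hecc u) (hDnonneg u)
      _ < (ecc G u : ℚ) * ∑ b : V, (G.dist u b : ℚ) :=
          mul_lt_mul_of_pos_left hDlt heccpos
end

section
/- Let G be a bipartite graph with the minimal value of a monotonically decreasing topological index I among all connected bipartite graphs with n vertices and k cut edges e₁,…,e_k. Then every connected component of G − {e₁,…,e_k} is either a complete bipartite graph or a single vertex. -/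
open SimpleGraph

lemma reach_sup_edge {V : Type*} (K : SimpleGraph V) (a b : V)
    (hab : K.Reachable a b) {u v : V}
    (h : (K ⊔ SimpleGraph.fromEdgeSet {s(a,b)}).Reachable u v) : K.Reachable u v := by
  obtain ⟨w⟩ := h
  induction w with
  | nil => exact Reachable.refl _
  | cons h' p ih =>
    rcases h' with h' | h'
    · exact (h'.reachable).trans ih
    · obtain ⟨he, hne⟩ := h'
      rw [Sym2.toRel_prop, Set.mem_singleton_iff, Sym2.eq_iff] at he
      rcases he with ⟨rfl, rfl⟩ | ⟨rfl, rfl⟩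
      · exact hab.trans ih
      · exact hab.symm.trans ih

/-- If `G` minimizes a monotonically decreasing topological index `I` among all connected
bipartite graphs on the same `n` vertices whose set of cut edges (bridges) is the given set of
`k` cut edges, then every connected component of `G` minus its cut edges is a complete
bipartite graph or a single vertex. -/
theorem components_of_minimizer_complete_bipartite
    {V : Type*} [Fintype V] (n k : ℕ) (hV : Fintype.card V = n)
    (I : SimpleGraph V → ℝ)
    (hI : ∀ (H : SimpleGraph V) (u v : V), u ≠ v → ¬ H.Adj u v →
      I (H ⊔ SimpleGraph.fromEdgeSet {s(u, v)}) < I H)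
    (G : SimpleGraph V) (hGconn : G.Connected) (hGbip : G.Colorable 2)
    (hGcut : {e : Sym2 V | G.IsBridge e}.ncard = k)
    (hmin : ∀ H : SimpleGraph V, H.Connected → H.Colorable 2 →
      {e : Sym2 V | H.IsBridge e} = {e : Sym2 V | G.IsBridge e} → I G ≤ I H) :
    ∀ C : (G.deleteEdges {e : Sym2 V | G.IsBridge e}).ConnectedComponent,
      (∃! v : V, (G.deleteEdges {e : Sym2 V | G.IsBridge e}).connectedComponentMk v = C) ∨
      (∃ X Y : Set V, Disjoint X Y ∧ X ∪ Y = C.supp ∧ X.Nonempty ∧ Y.Nonempty ∧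
        ∀ a ∈ C.supp, ∀ b ∈ C.supp,
          ((G.deleteEdges {e : Sym2 V | G.IsBridge e}).Adj a b ↔
            ((a ∈ X ∧ b ∈ Y) ∨ (a ∈ Y ∧ b ∈ X)))) := by
  classical
  set B : Set (Sym2 V) := {e : Sym2 V | G.IsBridge e} with hBdef
  set G' : SimpleGraph V := G.deleteEdges B with hG'def
  intro C
  have h2 : ∀ i : Fin 2, i = 0 ∨ i = 1 := by decide
  obtain ⟨v, hv⟩ := C.exists_rep
  by_cases hsing : ∀ w, G'.connectedComponentMk w = C → w = v
  · exact Or.inl ⟨v, hv, hsing⟩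
  right
  push_neg at hsing
  obtain ⟨w, hwC, hwv⟩ := hsing
  obtain ⟨c⟩ := hGbip
  -- basic facts
  have hG'le : G' ≤ G := deleteEdges_le B
  have hG'adj : ∀ {x y : V}, G'.Adj x y ↔ G.Adj x y ∧ s(x, y) ∉ B := by
    intro x y; rw [hG'def]; exact deleteEdges_adj
  -- a fundamental reachability fact: G' ≤ G \ {e} for any bridge e
  have hG'le_del : ∀ e ∈ B, G' ≤ G \ fromEdgeSet {e} := by
    intro e he x y hxy
    rw [hG'adj] at hxy
    refine ⟨hxy.1, ?_⟩
    rw [fromEdgeSet_adj]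
    rintro ⟨hmem, -⟩
    rw [Set.mem_singleton_iff] at hmem
    exact hxy.2 (hmem ▸ he)
  -- the claim: vertices in C with colors 0 and 1 are adjacent in G'
  have key : ∀ a b : V, a ∈ C.supp → b ∈ C.supp → c a = 0 → c b = 1 → G'.Adj a b := by
    intro a b haC hbC ha0 hb1
    have habne : a ≠ b := fun h => by simp [h, hb1] at ha0
    have hreach : G'.Reachable a b := by
      rw [ConnectedComponent.mem_supp_iff] at haC hbC
      exact ConnectedComponent.exact (haC.trans hbC.symm)
    by_contra hnadj
    by_cases hGadj : G.Adj a b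
    · -- then s(a,b) would be a bridge, but a,b are connected in G'
      have hmemB : s(a, b) ∈ B := by
        by_contra hmem
        exact hnadj (hG'adj.mpr ⟨hGadj, hmem⟩)
      have hbr : G.IsBridge s(a, b) := hmemB
      rw [isBridge_iff] at hbr
      exact hbr (hreach.mono (hG'le_del _ hmemB))
    · -- add the edge s(a,b): bridges are unchanged, contradiction with minimality
      set H : SimpleGraph V := G ⊔ fromEdgeSet {s(a, b)} with hHdef
      have hHadj : ∀ {x y : V}, H.Adj x y ↔ G.Adj x y ∨ (s(x, y) = s(a, b) ∧ x ≠ y) := by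
        intro x y
        rw [hHdef, sup_adj, fromEdgeSet_adj, Set.mem_singleton_iff]
      have hHconn : H.Connected := hGconn.mono le_sup_left
      have hHbip : H.Colorable 2 := by
        refine ⟨Coloring.mk c ?_⟩
        intro x y hxy
        rw [hHadj] at hxy
        rcases hxy with hxy | ⟨hxy, -⟩
        · exact c.valid hxy
        · rw [Sym2.eq_iff] at hxy
          rcases hxy with ⟨rfl, rfl⟩ | ⟨rfl, rfl⟩
          · rw [ha0, hb1]; decide
          · rw [ha0, hb1]; decide
      -- s(a,b) is not a bridge of H
      have hG'leHdel : G' ≤ H \ fromEdgeSet {s(a, b)} := by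
        intro x y hxy
        rw [hG'adj] at hxy
        refine ⟨le_sup_left (b := fromEdgeSet {s(a, b)}) hxy.1, ?_⟩
        rw [fromEdgeSet_adj]
        rintro ⟨hmem, -⟩
        rw [Set.mem_singleton_iff, Sym2.eq_iff] at hmem
        rcases hmem with ⟨rfl, rfl⟩ | ⟨rfl, rfl⟩
        · exact hGadj hxy.1
        · exact hGadj hxy.1.symm
      have hnotbrab : ¬ H.IsBridge s(a, b) := by
        rw [isBridge_iff]
        intro hnr
        exact hnr (hreach.mono hG'leHdel)
      -- bridges of H = bridges of G
      have hbrs : {e : Sym2 V | H.IsBridge e} = {e : Sym2 V | G.IsBridge e} := by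
        ext e
        induction e using Sym2.ind with
        | _ x y =>
        simp only [Set.mem_setOf_eq]
        rw [isBridge_iff, isBridge_iff]
        constructor
        · intro hnr
          have hadj : H.Adj x y :=
            (IsBridge.reachable_iff_adj (isBridge_iff.mpr hnr)).mp (hHconn.preconnected x y)
          rw [hHadj] at hadj
          rcases hadj with hadj | ⟨hxy, hne⟩
          · refine fun hr => hnr (hr.mono ?_)
            intro p q hpq
            exact ⟨le_sup_left (b := fromEdgeSet {s(a, b)}) hpq.1, hpq.2⟩
          · exfalso
            apply hnotbrab
            have hbrxy : H.IsBridge s(x, y) := isBridge_iff.mpr hnr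
            exact hxy ▸ hbrxy
        · intro hnr
          have hmemB' : s(x, y) ∈ B := isBridge_iff.mpr hnr
          refine fun hr => ?_
          have hle2 : H \ fromEdgeSet {s(x, y)} ≤
              (G \ fromEdgeSet {s(x, y)}) ⊔ fromEdgeSet {s(a, b)} := by
            intro p q hpq
            obtain ⟨hpq1, hpq2⟩ := hpq
            rcases hpq1 with hpq1 | hpq1
            · exact Or.inl ⟨hpq1, hpq2⟩
            · exact Or.inr hpq1
          have habr : (G \ fromEdgeSet {s(x, y)}).Reachable a b :=
            hreach.mono (hG'le_del _ hmemB')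
          exact hnr (reach_sup_edge _ a b habr (hr.mono hle2))
      have h1 := hmin H hHconn hHbip hbrs
      have h2' := hI G a b habne hGadj
      rw [← hHdef] at h2'
      linarith
  -- an adjacent pair inside C
  have hpair : ∃ x ∈ C.supp, ∃ y ∈ C.supp, G'.Adj x y := by
    have hreach : G'.Reachable w v := ConnectedComponent.exact (hwC.trans hv.symm)
    obtain ⟨p⟩ := hreach
    cases p with
    | nil => exact absurd rfl hwv
    | @cons _ y _ h' q =>
      have hyC : y ∈ C.supp := by
        rw [ConnectedComponent.mem_supp_iff, ConnectedComponent.sound q.reachable]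
        exact hv
      have hwC' : w ∈ C.supp := by rwa [ConnectedComponent.mem_supp_iff]
      exact ⟨w, hwC', y, hyC, h'⟩
  obtain ⟨x, hxC, y, hyC, hxy⟩ := hpair
  have hnexy := c.valid (hG'le hxy)
  -- now build X and Y
  refine ⟨C.supp ∩ (c ⁻¹' {0}), C.supp ∩ (c ⁻¹' {1}), ?_, ?_, ?_, ?_, ?_⟩
  · rw [Set.disjoint_left]
    rintro z ⟨-, hz0⟩ ⟨-, hz1⟩
    rw [Set.mem_preimage, Set.mem_singleton_iff] at hz0 hz1
    rw [hz0] at hz1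
    exact absurd hz1 (by decide)
  · ext z
    simp only [Set.mem_union, Set.mem_inter_iff, Set.mem_preimage, Set.mem_singleton_iff]
    rcases h2 (c z) with h | h <;> simp [h]
  · rcases h2 (c x) with h | h
    · exact ⟨x, hxC, by simpa using h⟩
    · rcases h2 (c y) with h' | h'
      · exact ⟨y, hyC, by simpa using h'⟩
      · exact absurd (h.trans h'.symm) hnexy
  · rcases h2 (c x) with h | h
    · rcases h2 (c y) with h' | h'
      · exact absurd (h.trans h'.symm) hnexy
      · exact ⟨y, hyC, by simpa using h'⟩
    · exact ⟨x, hxC, by simpa using h⟩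
  · intro a ha b hb
    simp only [Set.mem_inter_iff, Set.mem_preimage, Set.mem_singleton_iff]
    constructor
    · intro hadj
      have hne := c.valid (hG'le hadj)
      rcases h2 (c a) with ha0 | ha1
      · rcases h2 (c b) with hb0 | hb1
        · exact absurd (ha0.trans hb0.symm) hne
        · exact Or.inl ⟨⟨ha, ha0⟩, ⟨hb, hb1⟩⟩
      · rcases h2 (c b) with hb0 | hb1
        · exact Or.inr ⟨⟨ha, ha1⟩, ⟨hb, hb0⟩⟩
        · exact absurd (ha1.trans hb1.symm) hne
    · rintro (⟨⟨-, ha0⟩, ⟨-, hb1⟩⟩ | ⟨⟨-, ha1⟩, ⟨-, hb0⟩⟩)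
      · exact key a b ha hb ha0 hb1
      · exact (key b a hb ha hb0 ha1).symm
end

section
/- Let G be the graph obtained from a complete bipartite graph K_{s,t} by attaching a ≥ 1 pendent vertices to u and b ≥ 1 pendent vertices to v, where u and v are two distinct vertices in the same part of K_{s,t}, and let G' be obtained from G by moving all a pendent edges from u to v (so v has a+b pendent neighbors and u has none). Then W(G') − W(G) = −2ab, where W is the Wiener index. -/
open Finset
open scoped Classical

/-- The graph obtained from the complete bipartite graph `K_{s,t}` (first part `Fin s`,
second part `Fin t`) by attaching `a` pendant vertices to the vertex `u` and `b` pendant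
vertices to the vertex `v`, where `u v : Fin s` are in the same part. -/
def KstPend (s t a b : ℕ) (u v : Fin s) :
    SimpleGraph ((Fin s ⊕ Fin t) ⊕ (Fin a ⊕ Fin b)) :=
  SimpleGraph.fromRel (fun x y =>
    (∃ i j, x = Sum.inl (Sum.inl i) ∧ y = Sum.inl (Sum.inr j)) ∨
    (∃ p, x = Sum.inr (Sum.inl p) ∧ y = Sum.inl (Sum.inl u)) ∨
    (∃ q, x = Sum.inr (Sum.inr q) ∧ y = Sum.inl (Sum.inl v)))

section Aux
variable {s t a b : ℕ} {u v : Fin s}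

lemma adjAB (i : Fin s) (j : Fin t) :
    (KstPend s t a b u v).Adj (.inl (.inl i)) (.inl (.inr j)) :=
  ⟨by simp, Or.inl (Or.inl ⟨i, j, rfl, rfl⟩)⟩

lemma adjPu (p : Fin a) :
    (KstPend s t a b u v).Adj (.inr (.inl p)) (.inl (.inl u)) :=
  ⟨by simp, Or.inl (Or.inr (Or.inl ⟨p, rfl, rfl⟩))⟩

lemma adjQv (q : Fin b) :
    (KstPend s t a b u v).Adj (.inr (.inr q)) (.inl (.inl v)) :=
  ⟨by simp, Or.inl (Or.inr (Or.inr ⟨q, rfl, rfl⟩))⟩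

lemma walk_lower {W : Type*} {G : SimpleGraph W} (f : W → ℤ)
    (hf : ∀ ⦃x y⦄, G.Adj x y → (f x - f y).natAbs ≤ 1) {x y : W} (p : G.Walk x y) :
    (f x - f y).natAbs ≤ p.length := by
  induction p with
  | nil => simp
  | @cons x w y h q ih =>
      have h1 := hf h
      have h2 : (f x - f y).natAbs ≤ (f x - f w).natAbs + (f w - f y).natAbs := by
        have : f x - f y = (f x - f w) + (f w - f y) := by ring
        rw [this]; exact Int.natAbs_add_le _ _
      simp only [SimpleGraph.Walk.length_cons]
      omega

lemma dist_lower {W : Type*} {G : SimpleGraph W} (f : W → ℤ)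
    (hf : ∀ ⦃x y⦄, G.Adj x y → (f x - f y).natAbs ≤ 1) {x y : W} (hr : G.Reachable x y) :
    (f x - f y).natAbs ≤ G.dist x y := by
  obtain ⟨p, hp⟩ := hr.exists_walk_length_eq_dist
  rw [← hp]; exact walk_lower f hf p

lemma two_le_dist {W : Type*} {G : SimpleGraph W} {x y : W} (hne : x ≠ y)
    (hadj : ¬ G.Adj x y) (hr : G.Reachable x y) : 2 ≤ G.dist x y := by
  have h0 : G.dist x y ≠ 0 := SimpleGraph.dist_ne_zero_iff_ne_and_reachable.mpr ⟨hne, hr⟩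
  have h1 : G.dist x y ≠ 1 := fun h => hadj (SimpleGraph.dist_eq_one_iff_adj.mp h)
  omega

/-- elim adjacency into its three shapes -/
lemma adj_elim {x y : (Fin s ⊕ Fin t) ⊕ (Fin a ⊕ Fin b)}
    (h : (KstPend s t a b u v).Adj x y) :
    (∃ i j, (x = Sum.inl (Sum.inl i) ∧ y = Sum.inl (Sum.inr j)) ∨
            (y = Sum.inl (Sum.inl i) ∧ x = Sum.inl (Sum.inr j))) ∨
    (∃ p, (x = Sum.inr (Sum.inl p) ∧ y = Sum.inl (Sum.inl u)) ∨
          (y = Sum.inr (Sum.inl p) ∧ x = Sum.inl (Sum.inl u))) ∨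
    (∃ q, (x = Sum.inr (Sum.inr q) ∧ y = Sum.inl (Sum.inl v)) ∨
          (y = Sum.inr (Sum.inr q) ∧ x = Sum.inl (Sum.inl v))) := by
  obtain ⟨-, h | h⟩ := h <;>
  · rcases h with ⟨i, j, h1, h2⟩ | ⟨p, h1, h2⟩ | ⟨q, h1, h2⟩
    · exact Or.inl ⟨i, j, by tauto⟩
    · exact Or.inr (Or.inl ⟨p, by tauto⟩)
    · exact Or.inr (Or.inr ⟨q, by tauto⟩)

section Dists
variable (ht1 : 1 ≤ t)
include ht1

-- fixed element of Fin t
private def b0 (ht1 : 1 ≤ t) : Fin t := ⟨0, ht1⟩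

lemma distAB (i : Fin s) (j : Fin t) :
    (KstPend s t a b u v).dist (.inl (.inl i)) (.inl (.inr j)) = 1 :=
  SimpleGraph.dist_eq_one_iff_adj.mpr (adjAB i j)

lemma distAA (i j : Fin s) (hij : i ≠ j) :
    (KstPend s t a b u v).dist (.inl (.inl i)) (.inl (.inl j)) = 2 := by
  set G := KstPend s t a b u v
  let w : G.Walk (.inl (.inl i)) (.inl (.inl j)) :=
    .cons (adjAB i (b0 ht1)) (.cons (adjAB j (b0 ht1)).symm .nil)
  have hle := SimpleGraph.dist_le w
  have hge := two_le_dist (G := G) (by simp [hij]) (by simp [G, KstPend]) w.reachable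
  simp only [w, SimpleGraph.Walk.length_cons, SimpleGraph.Walk.length_nil] at hle
  omega

lemma distBB (i j : Fin t) (hij : i ≠ j) :
    (KstPend s t a b u v).dist (.inl (.inr i)) (.inl (.inr j)) = 2 := by
  set G := KstPend s t a b u v
  let w : G.Walk (.inl (.inr i)) (.inl (.inr j)) :=
    .cons (adjAB u i).symm (.cons (adjAB u j) .nil)
  have hle := SimpleGraph.dist_le w
  have hge := two_le_dist (G := G) (by simp [hij]) (by simp [G, KstPend]) w.reachable
  simp only [w, SimpleGraph.Walk.length_cons, SimpleGraph.Walk.length_nil] at hle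
  omega

lemma distPP (p p' : Fin a) (hpp : p ≠ p') :
    (KstPend s t a b u v).dist (.inr (.inl p)) (.inr (.inl p')) = 2 := by
  set G := KstPend s t a b u v
  let w : G.Walk (.inr (.inl p)) (.inr (.inl p')) :=
    .cons (adjPu p) (.cons (adjPu p').symm .nil)
  have hle := SimpleGraph.dist_le w
  have hge := two_le_dist (G := G) (by simp [hpp]) (by simp [G, KstPend]) w.reachable
  simp only [w, SimpleGraph.Walk.length_cons, SimpleGraph.Walk.length_nil] at hle
  omega

lemma distQQ (q q' : Fin b) (hqq : q ≠ q') :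
    (KstPend s t a b u v).dist (.inr (.inr q)) (.inr (.inr q')) = 2 := by
  set G := KstPend s t a b u v
  let w : G.Walk (.inr (.inr q)) (.inr (.inr q')) :=
    .cons (adjQv q) (.cons (adjQv q').symm .nil)
  have hle := SimpleGraph.dist_le w
  have hge := two_le_dist (G := G) (by simp [hqq]) (by simp [G, KstPend]) w.reachable
  simp only [w, SimpleGraph.Walk.length_cons, SimpleGraph.Walk.length_nil] at hle
  omega

lemma distPB (p : Fin a) (j : Fin t) :
    (KstPend s t a b u v).dist (.inr (.inl p)) (.inl (.inr j)) = 2 := by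
  set G := KstPend s t a b u v
  let w : G.Walk (.inr (.inl p)) (.inl (.inr j)) :=
    .cons (adjPu p) (.cons (adjAB u j) .nil)
  have hle := SimpleGraph.dist_le w
  have hge := two_le_dist (G := G) (by simp) (by simp [G, KstPend]) w.reachable
  simp only [w, SimpleGraph.Walk.length_cons, SimpleGraph.Walk.length_nil] at hle
  omega

lemma distQB (q : Fin b) (j : Fin t) :
    (KstPend s t a b u v).dist (.inr (.inr q)) (.inl (.inr j)) = 2 := by
  set G := KstPend s t a b u v
  let w : G.Walk (.inr (.inr q)) (.inl (.inr j)) :=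
    .cons (adjQv q) (.cons (adjAB v j) .nil)
  have hle := SimpleGraph.dist_le w
  have hge := two_le_dist (G := G) (by simp) (by simp [G, KstPend]) w.reachable
  simp only [w, SimpleGraph.Walk.length_cons, SimpleGraph.Walk.length_nil] at hle
  omega

lemma distPA (p : Fin a) (i : Fin s) (hi : i ≠ u) :
    (KstPend s t a b u v).dist (.inr (.inl p)) (.inl (.inl i)) = 3 := by
  set G := KstPend s t a b u v with hG
  let w : G.Walk (.inr (.inl p)) (.inl (.inl i)) :=
    .cons (adjPu p) (.cons (adjAB u (b0 ht1)) (.cons (adjAB i (b0 ht1)).symm .nil))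
  have hle := SimpleGraph.dist_le w
  -- potential
  set f : (Fin s ⊕ Fin t) ⊕ (Fin a ⊕ Fin b) → ℤ := fun x => match x with
    | .inl (.inl k) => if k = u then 1 else 3
    | .inl (.inr _) => 2
    | .inr (.inl _) => 0
    | .inr (.inr _) => if v = u then 1 else 3 with hf
  have hlip : ∀ ⦃x y⦄, G.Adj x y → (f x - f y).natAbs ≤ 1 := by
    intro x y h
    rcases adj_elim h with ⟨i', j', h1 | h1⟩ | ⟨p', h1 | h1⟩ | ⟨q', h1 | h1⟩ <;>
      obtain ⟨rfl, rfl⟩ := h1 <;> simp only [hf] <;> split_ifs <;> simp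
  have hge := dist_lower f hlip w.reachable
  simp only [w, SimpleGraph.Walk.length_cons, SimpleGraph.Walk.length_nil] at hle
  simp only [hf, if_neg hi] at hge
  norm_num at hge
  omega

lemma distQA (q : Fin b) (i : Fin s) (hi : i ≠ v) :
    (KstPend s t a b u v).dist (.inr (.inr q)) (.inl (.inl i)) = 3 := by
  set G := KstPend s t a b u v with hG
  let w : G.Walk (.inr (.inr q)) (.inl (.inl i)) :=
    .cons (adjQv q) (.cons (adjAB v (b0 ht1)) (.cons (adjAB i (b0 ht1)).symm .nil))
  have hle := SimpleGraph.dist_le w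
  set f : (Fin s ⊕ Fin t) ⊕ (Fin a ⊕ Fin b) → ℤ := fun x => match x with
    | .inl (.inl k) => if k = v then 1 else 3
    | .inl (.inr _) => 2
    | .inr (.inr _) => 0
    | .inr (.inl _) => if u = v then 1 else 3 with hf
  have hlip : ∀ ⦃x y⦄, G.Adj x y → (f x - f y).natAbs ≤ 1 := by
    intro x y h
    rcases adj_elim h with ⟨i', j', h1 | h1⟩ | ⟨p', h1 | h1⟩ | ⟨q', h1 | h1⟩ <;>
      obtain ⟨rfl, rfl⟩ := h1 <;> simp only [hf] <;> split_ifs <;> simp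
  have hge := dist_lower f hlip w.reachable
  simp only [w, SimpleGraph.Walk.length_cons, SimpleGraph.Walk.length_nil] at hle
  simp only [hf, if_neg hi] at hge
  norm_num at hge
  omega

lemma distPAu (p : Fin a) :
    (KstPend s t a b u v).dist (.inr (.inl p)) (.inl (.inl u)) = 1 :=
  SimpleGraph.dist_eq_one_iff_adj.mpr (adjPu p)

lemma distQAv (q : Fin b) :
    (KstPend s t a b u v).dist (.inr (.inr q)) (.inl (.inl v)) = 1 :=
  SimpleGraph.dist_eq_one_iff_adj.mpr (adjQv q)

lemma distPQ_ne (huv : u ≠ v) (p : Fin a) (q : Fin b) :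
    (KstPend s t a b u v).dist (.inr (.inl p)) (.inr (.inr q)) = 4 := by
  set G := KstPend s t a b u v with hG
  let w : G.Walk (.inr (.inl p)) (.inr (.inr q)) :=
    .cons (adjPu p) (.cons (adjAB u (b0 ht1))
      (.cons (adjAB v (b0 ht1)).symm (.cons (adjQv q).symm .nil)))
  have hle := SimpleGraph.dist_le w
  set f : (Fin s ⊕ Fin t) ⊕ (Fin a ⊕ Fin b) → ℤ := fun x => match x with
    | .inl (.inl k) => if k = u then 1 else 3
    | .inl (.inr _) => 2
    | .inr (.inl _) => 0
    | .inr (.inr _) => 4 with hf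
  have hlip : ∀ ⦃x y⦄, G.Adj x y → (f x - f y).natAbs ≤ 1 := by
    intro x y h
    rcases adj_elim h with ⟨i', j', h1 | h1⟩ | ⟨p', h1 | h1⟩ | ⟨q', h1 | h1⟩ <;>
      obtain ⟨rfl, rfl⟩ := h1 <;> simp only [hf] <;> split_ifs <;> simp_all
  have hge := dist_lower f hlip w.reachable
  simp only [w, SimpleGraph.Walk.length_cons, SimpleGraph.Walk.length_nil] at hle
  simp only [hf] at hge
  norm_num at hge
  omega

lemma distPQ_eq (p : Fin a) (q : Fin b) :
    (KstPend s t a b u u).dist (.inr (.inl p)) (.inr (.inr q)) = 2 := by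
  set G := KstPend s t a b u u
  let w : G.Walk (.inr (.inl p)) (.inr (.inr q)) :=
    .cons (adjPu p) (.cons (adjQv (u := u) (v := u) q).symm .nil)
  have hle := SimpleGraph.dist_le w
  have hge := two_le_dist (G := G) (by simp) (by simp [G, KstPend]) w.reachable
  simp only [w, SimpleGraph.Walk.length_cons, SimpleGraph.Walk.length_nil] at hle
  omega

end Dists

section Master
variable (s t a b : ℕ) (u v : Fin s)

/-- Distance table for `KstPend s t a b u v`, as a rational number. -/
def Dq : ((Fin s ⊕ Fin t) ⊕ (Fin a ⊕ Fin b)) → ((Fin s ⊕ Fin t) ⊕ (Fin a ⊕ Fin b)) → ℚ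
  | .inl (.inl i), .inl (.inl j) => if i = j then 0 else 2
  | .inl (.inl _), .inl (.inr _) => 1
  | .inl (.inr _), .inl (.inl _) => 1
  | .inl (.inr i), .inl (.inr j) => if i = j then 0 else 2
  | .inl (.inl i), .inr (.inl _) => if i = u then 1 else 3
  | .inr (.inl _), .inl (.inl i) => if i = u then 1 else 3
  | .inl (.inl i), .inr (.inr _) => if i = v then 1 else 3
  | .inr (.inr _), .inl (.inl i) => if i = v then 1 else 3
  | .inl (.inr _), .inr _ => 2
  | .inr _, .inl (.inr _) => 2
  | .inr (.inl p), .inr (.inl p') => if p = p' then 0 else 2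
  | .inr (.inr q), .inr (.inr q') => if q = q' then 0 else 2
  | .inr (.inl _), .inr (.inr _) => if u = v then 2 else 4
  | .inr (.inr _), .inr (.inl _) => if u = v then 2 else 4

lemma dist_cast (ht1 : 1 ≤ t) (x y : (Fin s ⊕ Fin t) ⊕ (Fin a ⊕ Fin b)) :
    (((KstPend s t a b u v).dist x y : ℕ) : ℚ) = Dq s t a b u v x y := by
  rcases x with (i | j) | (p | q) <;> rcases y with (i' | j') | (p' | q')
  · by_cases h : i = i'
    · subst h; simp [Dq, SimpleGraph.dist_self]
    · rw [distAA ht1 i i' h]; simp [Dq, h]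
  · rw [distAB ht1]; simp [Dq]
  · rw [SimpleGraph.dist_comm]
    by_cases h : i = u
    · subst h; rw [distPAu ht1]; simp [Dq]
    · rw [distPA ht1 p' i h]; simp [Dq, h]
  · rw [SimpleGraph.dist_comm]
    by_cases h : i = v
    · subst h; rw [distQAv ht1]; simp [Dq]
    · rw [distQA ht1 q' i h]; simp [Dq, h]
  · rw [SimpleGraph.dist_comm, distAB ht1]; simp [Dq]
  · by_cases h : j = j'
    · subst h; simp [Dq, SimpleGraph.dist_self]
    · rw [distBB ht1 j j' h]; simp [Dq, h]
  · rw [SimpleGraph.dist_comm, distPB ht1]; simp [Dq]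
  · rw [SimpleGraph.dist_comm, distQB ht1]; simp [Dq]
  · by_cases h : i' = u
    · subst h; rw [distPAu ht1]; simp [Dq]
    · rw [distPA ht1 p i' h]; simp [Dq, h]
  · rw [distPB ht1]; simp [Dq]
  · by_cases h : p = p'
    · subst h; simp [Dq, SimpleGraph.dist_self]
    · rw [distPP ht1 p p' h]; simp [Dq, h]
  · by_cases h : u = v
    · subst h; rw [distPQ_eq ht1]; simp [Dq]
    · rw [distPQ_ne ht1 h]; simp [Dq, h]
  · by_cases h : i' = v
    · subst h; rw [distQAv ht1]; simp [Dq]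
    · rw [distQA ht1 q i' h]; simp [Dq, h]
  · rw [distQB ht1]; simp [Dq]
  · rw [SimpleGraph.dist_comm]
    by_cases h : u = v
    · subst h; rw [distPQ_eq ht1]; simp [Dq]
    · rw [distPQ_ne ht1 h]; simp [Dq, h]
  · by_cases h : q = q'
    · subst h; simp [Dq, SimpleGraph.dist_self]
    · rw [distQQ ht1 q q' h]; simp [Dq, h]


lemma sum_if_left {n : ℕ} (w : Fin n) (c d : ℚ) :
    ∑ i : Fin n, (if i = w then c else d) = d * n + c - d := by
  have h : ∀ i : Fin n, (if i = w then c else d) = d + (if i = w then (c - d) else 0) :=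
    fun i => by split_ifs <;> ring
  simp_rw [h]
  rw [Finset.sum_add_distrib, Finset.sum_ite_eq' Finset.univ w fun _ => c - d]
  simp [mul_comm]
  ring

lemma sum_if_right {n : ℕ} (w : Fin n) (c d : ℚ) :
    ∑ i : Fin n, (if w = i then c else d) = d * n + c - d := by
  simp_rw [show ∀ i : Fin n, (if w = i then c else d) = (if i = w then c else d) from
    fun i => by simp [eq_comm]]
  exact sum_if_left w c d


lemma sum_Dq (u' v' : Fin s) :
    ∑ x, ∑ y, Dq s t a b u' v' x y =
      2*(s:ℚ)*(s-1) + 2*(t:ℚ)*(t-1) + 2*(a:ℚ)*(a-1) + 2*(b:ℚ)*(b-1) + 2*s*t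
      + 2*((a:ℚ)+b)*(3*s-2) + 4*(t:ℚ)*((a:ℚ)+b)
      + (if u' = v' then 2 else 4) * (2*(a:ℚ)*b) := by
  simp only [Fintype.sum_sum_type, Dq, Finset.sum_add_distrib, Finset.sum_const,
    Finset.card_univ, Fintype.card_fin, nsmul_eq_mul, mul_ite, mul_zero, mul_one,
    sum_if_left, sum_if_right, Finset.mul_sum, Finset.sum_ite_irrel, Fintype.card_sum]
  push_cast
  split_ifs <;> ring

end Master
end Aux

/-- Moving all `a` pendant edges from `u` to `v` changes the Wiener index by exactly `-2ab`. -/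
theorem wiener_move_pendants (s t a b : ℕ) (hs : 2 ≤ s) (ht : 2 ≤ t)
    (ha : 1 ≤ a) (hb : 1 ≤ b) (u v : Fin s) (huv : u ≠ v) :
    wiener (KstPend s t a b v v) - wiener (KstPend s t a b u v) = -2 * (a : ℚ) * b := by
  have ht1 : 1 ≤ t := by omega
  have e : ∀ u' v' : Fin s, wiener (KstPend s t a b u' v') =
      (1/2) * ∑ x, ∑ y, Dq s t a b u' v' x y := by
    intro u' v'
    unfold wiener
    congr 1
    exact Finset.sum_congr rfl fun x _ =>
      Finset.sum_congr rfl fun y _ => dist_cast s t a b u' v' ht1 x y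
  rw [e, e, sum_Dq, sum_Dq, if_pos rfl, if_neg huv]
  ring
end

section
/- Let G be the graph obtained from K_{s,t} by attaching a ≥ 1 pendent vertices to u and b ≥ 1 pendent vertices to v, where u, v are distinct vertices of the same part of K_{s,t} (s,t ≥ 2), and let G' be obtained by moving all a pendent edges from u to v. Then H(G') − H(G) = ab/4, where H is the Harary index. -/
open Finset
open scoped Classical

section Aux
open Finset
open scoped Classical

def dfun (s t a b : ℕ) (u v : Fin s) :
    ((Fin s ⊕ Fin t) ⊕ (Fin a ⊕ Fin b)) → ((Fin s ⊕ Fin t) ⊕ (Fin a ⊕ Fin b)) → ℕ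
  | Sum.inl (Sum.inl i), Sum.inl (Sum.inl j) => if i = j then 0 else 2
  | Sum.inl (Sum.inl _), Sum.inl (Sum.inr _) => 1
  | Sum.inl (Sum.inr _), Sum.inl (Sum.inl _) => 1
  | Sum.inl (Sum.inr i), Sum.inl (Sum.inr j) => if i = j then 0 else 2
  | Sum.inl (Sum.inl i), Sum.inr (Sum.inl _) => if i = u then 1 else 3
  | Sum.inr (Sum.inl _), Sum.inl (Sum.inl i) => if i = u then 1 else 3
  | Sum.inl (Sum.inl i), Sum.inr (Sum.inr _) => if i = v then 1 else 3
  | Sum.inr (Sum.inr _), Sum.inl (Sum.inl i) => if i = v then 1 else 3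
  | Sum.inl (Sum.inr _), Sum.inr _ => 2
  | Sum.inr _, Sum.inl (Sum.inr _) => 2
  | Sum.inr (Sum.inl p), Sum.inr (Sum.inl q) => if p = q then 0 else 2
  | Sum.inr (Sum.inr p), Sum.inr (Sum.inr q) => if p = q then 0 else 2
  | Sum.inr (Sum.inl _), Sum.inr (Sum.inr _) => if u = v then 2 else 4
  | Sum.inr (Sum.inr _), Sum.inr (Sum.inl _) => if u = v then 2 else 4

variable {s t a b : ℕ} {u v : Fin s}

lemma adj_LR (i : Fin s) (j : Fin t) :
    (KstPend s t a b u v).Adj (Sum.inl (Sum.inl i)) (Sum.inl (Sum.inr j)) := by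
  simp [KstPend]

lemma adj_AU (p : Fin a) :
    (KstPend s t a b u v).Adj (Sum.inr (Sum.inl p)) (Sum.inl (Sum.inl u)) := by
  simp [KstPend]

lemma adj_BV (q : Fin b) :
    (KstPend s t a b u v).Adj (Sum.inr (Sum.inr q)) (Sum.inl (Sum.inl v)) := by
  simp [KstPend]

lemma lip (x y z : (Fin s ⊕ Fin t) ⊕ (Fin a ⊕ Fin b))
    (h : (KstPend s t a b u v).Adj y z) :
    dfun s t a b u v x z ≤ dfun s t a b u v x y + 1 := by
  rcases x with (i | j) | (p | q) <;> rcases y with (i' | j') | (p' | q') <;>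
    rcases z with (i'' | j'') | (p'' | q'') <;>
    simp_all [KstPend, dfun] <;> split_ifs <;> omega

lemma exists_walk (ht : 0 < t) (x y : (Fin s ⊕ Fin t) ⊕ (Fin a ⊕ Fin b)) :
    ∃ w : (KstPend s t a b u v).Walk x y, w.length = dfun s t a b u v x y := by
  set j0 : Fin t := ⟨0, ht⟩
  rcases x with (i | j) | (p | q) <;> rcases y with (i' | j') | (p' | q')
  · by_cases h : i = i'
    · subst h; exact ⟨.nil, by simp [dfun]⟩
    · exact ⟨.cons (adj_LR i j0) (.cons (adj_LR i' j0).symm .nil), by simp [dfun, h]⟩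
  · exact ⟨.cons (adj_LR i j') .nil, by simp [dfun]⟩
  · by_cases h : i = u
    · subst h; exact ⟨.cons (adj_AU p').symm .nil, by simp [dfun]⟩
    · exact ⟨.cons (adj_LR i j0) (.cons (adj_LR u j0).symm (.cons (adj_AU p').symm .nil)),
        by simp [dfun, h]⟩
  · by_cases h : i = v
    · subst h; exact ⟨.cons (adj_BV q').symm .nil, by simp [dfun]⟩
    · exact ⟨.cons (adj_LR i j0) (.cons (adj_LR v j0).symm (.cons (adj_BV q').symm .nil)),
        by simp [dfun, h]⟩
  · exact ⟨.cons (adj_LR i' j).symm .nil, by simp [dfun]⟩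
  · by_cases h : j = j'
    · subst h; exact ⟨.nil, by simp [dfun]⟩
    · exact ⟨.cons (adj_LR u j).symm (.cons (adj_LR u j') .nil), by simp [dfun, h]⟩
  · exact ⟨.cons (adj_LR u j).symm (.cons (adj_AU p').symm .nil), by simp [dfun]⟩
  · exact ⟨.cons (adj_LR v j).symm (.cons (adj_BV q').symm .nil), by simp [dfun]⟩
  · by_cases h : i' = u
    · subst h; exact ⟨.cons (adj_AU p) .nil, by simp [dfun]⟩
    · exact ⟨.cons (adj_AU p) (.cons (adj_LR u j0) (.cons (adj_LR i' j0).symm .nil)),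
        by simp [dfun, h]⟩
  · exact ⟨.cons (adj_AU p) (.cons (adj_LR u j') .nil), by simp [dfun]⟩
  · by_cases h : p = p'
    · subst h; exact ⟨.nil, by simp [dfun]⟩
    · exact ⟨.cons (adj_AU p) (.cons (adj_AU p').symm .nil), by simp [dfun, h]⟩
  · by_cases h : u = v
    · subst h; exact ⟨.cons (adj_AU p) (.cons (adj_BV q').symm .nil), by simp [dfun]⟩
    · exact ⟨.cons (adj_AU p) (.cons (adj_LR u j0) (.cons (adj_LR v j0).symm
        (.cons (adj_BV q').symm .nil))), by simp [dfun, h]⟩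
  · by_cases h : i' = v
    · subst h; exact ⟨.cons (adj_BV q) .nil, by simp [dfun]⟩
    · exact ⟨.cons (adj_BV q) (.cons (adj_LR v j0) (.cons (adj_LR i' j0).symm .nil)),
        by simp [dfun, h]⟩
  · exact ⟨.cons (adj_BV q) (.cons (adj_LR v j') .nil), by simp [dfun]⟩
  · by_cases h : u = v
    · subst h; exact ⟨.cons (adj_BV q) (.cons (adj_AU p').symm .nil), by simp [dfun]⟩
    · exact ⟨.cons (adj_BV q) (.cons (adj_LR v j0) (.cons (adj_LR u j0).symm
        (.cons (adj_AU p').symm .nil))), by simp [dfun, h]⟩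
  · by_cases h : q = q'
    · subst h; exact ⟨.nil, by simp [dfun]⟩
    · exact ⟨.cons (adj_BV q) (.cons (adj_BV q').symm .nil), by simp [dfun, h]⟩

lemma dfun_self (x : (Fin s ⊕ Fin t) ⊕ (Fin a ⊕ Fin b)) : dfun s t a b u v x x = 0 := by
  rcases x with (i | j) | (p | q) <;> simp [dfun]

lemma dfun_le_length (x : (Fin s ⊕ Fin t) ⊕ (Fin a ⊕ Fin b))
    {p q : (Fin s ⊕ Fin t) ⊕ (Fin a ⊕ Fin b)} (w : (KstPend s t a b u v).Walk p q) :
    dfun s t a b u v x q ≤ dfun s t a b u v x p + w.length := by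
  induction w with
  | nil => simp
  | cons h w ih =>
    simp only [SimpleGraph.Walk.length_cons]
    have := lip (u := u) (v := v) x _ _ h
    omega

lemma dist_eq (ht : 0 < t) (x y : (Fin s ⊕ Fin t) ⊕ (Fin a ⊕ Fin b)) :
    (KstPend s t a b u v).dist x y = dfun s t a b u v x y := by
  obtain ⟨w, hw⟩ := exists_walk (u := u) (v := v) ht x y
  refine le_antisymm (hw ▸ SimpleGraph.dist_le w) ?_
  obtain ⟨w', hw'⟩ := SimpleGraph.Reachable.exists_walk_length_eq_dist ⟨w⟩
  have := dfun_le_length (u := u) (v := v) x w'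
  rw [dfun_self] at this
  omega

end Aux

def Dfn (s t a b : ℕ) (u v : Fin s) :
    ((Fin s ⊕ Fin t) ⊕ (Fin a ⊕ Fin b)) → ((Fin s ⊕ Fin t) ⊕ (Fin a ⊕ Fin b)) → ℚ
  | Sum.inl (Sum.inl i), Sum.inr (Sum.inl _) =>
      (if i = v then (1 : ℚ) else 1/3) - (if i = u then (1 : ℚ) else 1/3)
  | Sum.inr (Sum.inl _), Sum.inl (Sum.inl i) =>
      (if i = v then (1 : ℚ) else 1/3) - (if i = u then (1 : ℚ) else 1/3)
  | Sum.inr (Sum.inl _), Sum.inr (Sum.inr _) => 1/4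
  | Sum.inr (Sum.inr _), Sum.inr (Sum.inl _) => 1/4
  | _, _ => 0

variable {s t a b : ℕ} {u v : Fin s}

lemma Dfn_self (x : (Fin s ⊕ Fin t) ⊕ (Fin a ⊕ Fin b)) : Dfn s t a b u v x x = 0 := by
  rcases x with (i | j) | (p | q) <;> simp [Dfn]

lemma hpt (huv : u ≠ v) (x y : (Fin s ⊕ Fin t) ⊕ (Fin a ⊕ Fin b)) :
    (1 : ℚ) / (dfun s t a b v v x y : ℚ) - 1 / (dfun s t a b u v x y : ℚ) =
    Dfn s t a b u v x y := by
  rcases x with (i | j) | (p | q) <;> rcases y with (i' | j') | (p' | q') <;>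
    simp [dfun, Dfn, huv] <;> first
      | (split_ifs <;> norm_num)
      | norm_num

lemma sum_Dfn (huv : u ≠ v) :
    ∑ x : (Fin s ⊕ Fin t) ⊕ (Fin a ⊕ Fin b), ∑ y : (Fin s ⊕ Fin t) ⊕ (Fin a ⊕ Fin b),
      Dfn s t a b u v x y = (a : ℚ) * b / 2 := by
  have hite : ∀ (w : Fin s) (c d : ℚ),
      ∑ i : Fin s, (if i = w then c else d) = c - d + s * d := by
    intro w c d
    have h1 : ∀ i : Fin s, (if i = w then c else d) = (if i = w then c - d else 0) + d := by
      intro i; split_ifs <;> ring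
    simp only [h1, Finset.sum_add_distrib, Finset.sum_ite_eq' Finset.univ w (fun _ => c - d),
      Finset.mem_univ, if_true, Finset.sum_const, Finset.card_univ, Fintype.card_fin,
      nsmul_eq_mul]
  have hg : ∑ i : Fin s, ((if i = v then (1:ℚ) else 1/3) - (if i = u then (1:ℚ) else 1/3)) = 0 := by
    rw [Finset.sum_sub_distrib, hite, hite]; ring
  simp only [Fintype.sum_sum_type, Dfn, Finset.sum_const, Finset.sum_const_zero,
    Finset.card_univ, Fintype.card_fin, nsmul_eq_mul, mul_zero, add_zero, zero_add,
    Finset.sum_sub_distrib, ← Finset.sum_div, ← Finset.mul_sum]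
  rw [hite, hite]
  ring


/-- Moving all `a` pendant edges from `u` to `v` changes the Harary index by exactly `ab/4`. -/
theorem harary_move_pendants (s t a b : ℕ) (hs : 2 ≤ s) (ht : 2 ≤ t)
    (ha : 1 ≤ a) (hb : 1 ≤ b) (u v : Fin s) (huv : u ≠ v) :
    harary (KstPend s t a b v v) - harary (KstPend s t a b u v) = (a : ℚ) * b / 4 := by
  classical
  have ht0 : 0 < t := by omega
  have key : ∀ p : ((Fin s ⊕ Fin t) ⊕ (Fin a ⊕ Fin b)) × ((Fin s ⊕ Fin t) ⊕ (Fin a ⊕ Fin b)),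
      p ∈ (Finset.univ.offDiag : Finset _) →
      (1 : ℚ) / ((KstPend s t a b v v).dist p.1 p.2 : ℚ) -
        (1 : ℚ) / ((KstPend s t a b u v).dist p.1 p.2 : ℚ) = Dfn s t a b u v p.1 p.2 := by
    intro p _
    rw [dist_eq ht0, dist_eq ht0]
    exact hpt huv p.1 p.2
  unfold harary
  rw [← mul_sub, ← Finset.sum_sub_distrib]
  rw [Finset.sum_congr (by congr!) key]
  rw [Finset.sum_subset (fun p (_ : p ∈ Finset.univ.offDiag) =>
      Finset.mem_product.2 ⟨Finset.mem_univ _, Finset.mem_univ _⟩)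
    (fun p _ hp => by
      have hpp : p.1 = p.2 := by
        by_contra hne
        exact hp (Finset.mem_offDiag.2 ⟨Finset.mem_univ _, Finset.mem_univ _, hne⟩)
      rw [hpp, Dfn_self])]
  rw [Finset.sum_product, sum_Dfn huv]
  ring
end

section
/- Let G be obtained from K_{s,t} (2 ≤ s ≤ t) by attaching a ≥ 1 pendent vertices to a vertex x_p in the part of size s and b ≥ 1 pendent vertices to a vertex y_q in the part of size t, and let G' be obtained by moving the b pendent edges from y_q to x_p. Then W(G') < W(G), where W is the Wiener index. -/
open Finset
open scoped Classical

/-- The graph obtained from the complete bipartite graph `K_{s,t}` (parts `Fin s` and `Fin t`)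
by attaching `a` pendant vertices to the vertex `xp` of the part of size `s` and `b` pendant
vertices to the vertex `w` (which is `y_q` in the part of size `t` for the graph `G`, and
`x_p` itself for the graph `G'`). -/
def KstPend2 (s t a b : ℕ) (xp : Fin s) (w : Fin s ⊕ Fin t) :
    SimpleGraph ((Fin s ⊕ Fin t) ⊕ (Fin a ⊕ Fin b)) :=
  SimpleGraph.fromRel (fun x y =>
    (∃ i j, x = Sum.inl (Sum.inl i) ∧ y = Sum.inl (Sum.inr j)) ∨
    (∃ p, x = Sum.inr (Sum.inl p) ∧ y = Sum.inl (Sum.inl xp)) ∨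
    (∃ q, x = Sum.inr (Sum.inr q) ∧ y = Sum.inl w))


lemma sum_ite_fin {n : ℕ} (x : Fin n) (c d : ℚ) :
    ∑ i : Fin n, (if i = x then c else d) = c + ((n:ℚ)-1)*d := by
  have h : ∀ i : Fin n, (if i = x then c else d) = d + (if i = x then c - d else 0) := by
    intro i; split <;> ring
  simp only [h]
  rw [Finset.sum_add_distrib, Finset.sum_const]
  simp [Finset.sum_ite_eq', Finset.card_univ]
  ring

lemma sum_ite_fin' {n : ℕ} (x : Fin n) (c d : ℚ) :
    ∑ i : Fin n, (if x = i then c else d) = c + ((n:ℚ)-1)*d := by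
  rw [← sum_ite_fin x c d]
  refine Finset.sum_congr rfl (fun i _ => ?_)
  by_cases h : i = x
  · subst h; simp
  · rw [if_neg h, if_neg (fun he => h he.symm)]



lemma dist_eq_two' {V : Type*} {G : SimpleGraph V} {u v m : V} (hne : u ≠ v)
    (hadj : ¬ G.Adj u v) (h1 : G.Adj u m) (h2 : G.Adj m v) : G.dist u v = 2 := by
  have hle : G.dist u v ≤ 2 := by
    have := SimpleGraph.dist_le (h1.toWalk.append h2.toWalk)
    simpa using this
  have hr : G.Reachable u v := ⟨h1.toWalk.append h2.toWalk⟩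
  have h0 : G.dist u v ≠ 0 := fun h => hne (hr.dist_eq_zero_iff.mp h)
  have h1' : G.dist u v ≠ 1 := fun h => hadj (SimpleGraph.dist_eq_one_iff_adj.mp h)
  omega

lemma dist_eq_three' {V : Type*} {G : SimpleGraph V} {u v m1 m2 : V}
    (hadj : ¬ G.Adj u v) (hcn : ∀ m, G.Adj u m → ¬ G.Adj m v)
    (h1 : G.Adj u m1) (h2 : G.Adj m1 m2) (h3 : G.Adj m2 v) : G.dist u v = 3 := by
  have hne : u ≠ v := by rintro rfl; exact hcn m1 h1 h1.symm
  have hle : G.dist u v ≤ 3 := by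
    have := SimpleGraph.dist_le (h1.toWalk.append (h2.toWalk.append h3.toWalk))
    simpa using this
  have hr : G.Reachable u v := ⟨h1.toWalk.append (h2.toWalk.append h3.toWalk)⟩
  have h0 : G.dist u v ≠ 0 := fun h => hne (hr.dist_eq_zero_iff.mp h)
  have h1' : G.dist u v ≠ 1 := fun h => hadj (SimpleGraph.dist_eq_one_iff_adj.mp h)
  have h2' : G.dist u v ≠ 2 := by
    intro hd
    obtain ⟨p, hp⟩ := hr.exists_walk_length_eq_dist
    rw [hd] at hp
    cases p with
    | nil => simp at hp
    | cons h q =>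
      cases q with
      | nil => simp at hp
      | cons h' q' =>
        cases q' with
        | nil => exact hcn _ h h'
        | cons _ _ => simp [SimpleGraph.Walk.length_cons] at hp
  omega

section
variable {s t a b : ℕ} {xp : Fin s} {w : Fin s ⊕ Fin t}
local notation "K" => KstPend2 s t a b xp w
local notation "X" i => (Sum.inl (Sum.inl i) : (Fin s ⊕ Fin t) ⊕ (Fin a ⊕ Fin b))
local notation "Y" j => (Sum.inl (Sum.inr j) : (Fin s ⊕ Fin t) ⊕ (Fin a ⊕ Fin b))
local notation "A" p => (Sum.inr (Sum.inl p) : (Fin s ⊕ Fin t) ⊕ (Fin a ⊕ Fin b))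
local notation "B" q => (Sum.inr (Sum.inr q) : (Fin s ⊕ Fin t) ⊕ (Fin a ⊕ Fin b))

lemma adj_B_iff (q : Fin b) (v) : (K).Adj (B q) v ↔ v = Sum.inl w := by
  constructor
  · rintro ⟨hne, h | h | h⟩ <;> obtain _|_|_ := h <;> simp_all
  · rintro rfl; simp [KstPend2]

lemma adj_A_iff (p : Fin a) (v) : (K).Adj (A p) v ↔ v = (X xp) := by
  constructor
  · rintro ⟨hne, h | h | h⟩ <;> obtain _|_|_ := h <;> simp_all
  · rintro rfl; simp [KstPend2]

lemma adjXY (i : Fin s) (j : Fin t) : (K).Adj (X i) (Y j) := by simp [KstPend2]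

lemma adjAX (p : Fin a) : (K).Adj (A p) (X xp) := (adj_A_iff p _).mpr rfl

lemma adjBW (q : Fin b) : (K).Adj (B q) (Sum.inl w) := (adj_B_iff q _).mpr rfl

lemma nadjXX (i j : Fin s) : ¬ (K).Adj (X i) (X j) := by simp [KstPend2]

lemma nadjYY (i j : Fin t) : ¬ (K).Adj (Y i) (Y j) := by simp [KstPend2]

lemma distXX (j0 : Fin t) (i j : Fin s) :
    (K).dist (X i) (X j) = if i = j then 0 else 2 := by
  split
  · subst ‹i = j›; exact SimpleGraph.dist_self
  · exact dist_eq_two' (by simp_all) (nadjXX i j) (adjXY i j0) (adjXY j j0).symm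

lemma distXY (i : Fin s) (j : Fin t) : (K).dist (X i) (Y j) = 1 :=
  SimpleGraph.dist_eq_one_iff_adj.mpr (adjXY i j)

lemma distYX (j : Fin t) (i : Fin s) : (K).dist (Y j) (X i) = 1 := by
  rw [SimpleGraph.dist_comm]; exact distXY i j

lemma distYY (i0 : Fin s) (i j : Fin t) :
    (K).dist (Y i) (Y j) = if i = j then 0 else 2 := by
  split
  · subst ‹i = j›; exact SimpleGraph.dist_self
  · exact dist_eq_two' (by simp_all) (nadjYY i j) (adjXY i0 i).symm (adjXY i0 j)

lemma distAA_s9 (p p' : Fin a) :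
    (K).dist (A p) (A p') = if p = p' then 0 else 2 := by
  split
  · subst ‹p = p'›; exact SimpleGraph.dist_self
  · exact dist_eq_two' (by simp_all) (by simp [adj_A_iff]) (adjAX p) (adjAX p').symm

lemma distAX (j0 : Fin t) (p : Fin a) (i : Fin s) :
    (K).dist (A p) (X i) = if i = xp then 1 else 3 := by
  split
  · subst ‹i = xp›; exact SimpleGraph.dist_eq_one_iff_adj.mpr (adjAX p)
  · refine dist_eq_three' (by simp_all [adj_A_iff]) ?_ (adjAX p) (adjXY xp j0) (adjXY i j0).symm
    intro m hm
    rw [adj_A_iff] at hm; subst hm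
    exact nadjXX xp i

lemma distXA (j0 : Fin t) (i : Fin s) (p : Fin a) :
    (K).dist (X i) (A p) = if i = xp then 1 else 3 := by
  rw [SimpleGraph.dist_comm]; exact distAX j0 p i

lemma distAY (p : Fin a) (j : Fin t) : (K).dist (A p) (Y j) = 2 :=
  dist_eq_two' (by simp) (by simp [adj_A_iff]) (adjAX p) (adjXY xp j)

lemma distYA (j : Fin t) (p : Fin a) : (K).dist (Y j) (A p) = 2 := by
  rw [SimpleGraph.dist_comm]; exact distAY p j

lemma distBB_s9 (q q' : Fin b) :
    (K).dist (B q) (B q') = if q = q' then 0 else 2 := by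
  split
  · subst ‹q = q'›; exact SimpleGraph.dist_self
  · exact dist_eq_two' (by simp_all) (by simp [adj_B_iff]) (adjBW q) (adjBW q').symm

end

section Gprime
variable {s t a b : ℕ} {xp : Fin s}
local notation "K'" => KstPend2 s t a b xp (Sum.inl xp)
local notation "X" i => (Sum.inl (Sum.inl i) : (Fin s ⊕ Fin t) ⊕ (Fin a ⊕ Fin b))
local notation "Y" j => (Sum.inl (Sum.inr j) : (Fin s ⊕ Fin t) ⊕ (Fin a ⊕ Fin b))
local notation "A" p => (Sum.inr (Sum.inl p) : (Fin s ⊕ Fin t) ⊕ (Fin a ⊕ Fin b))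
local notation "B" q => (Sum.inr (Sum.inr q) : (Fin s ⊕ Fin t) ⊕ (Fin a ⊕ Fin b))

lemma distBX' (j0 : Fin t) (q : Fin b) (i : Fin s) :
    (K').dist (B q) (X i) = if i = xp then 1 else 3 := by
  split
  · subst ‹i = xp›; exact SimpleGraph.dist_eq_one_iff_adj.mpr (adjBW q)
  · refine dist_eq_three' (by simp_all [adj_B_iff]) ?_ (adjBW q) (adjXY xp j0) (adjXY i j0).symm
    intro m hm
    rw [adj_B_iff] at hm; subst hm
    exact nadjXX xp i

lemma distXB' (j0 : Fin t) (i : Fin s) (q : Fin b) :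
    (K').dist (X i) (B q) = if i = xp then 1 else 3 := by
  rw [SimpleGraph.dist_comm]; exact distBX' j0 q i

lemma distBY' (q : Fin b) (j : Fin t) : (K').dist (B q) (Y j) = 2 :=
  dist_eq_two' (by simp) (by simp [adj_B_iff]) (adjBW q) (adjXY xp j)

lemma distYB' (j : Fin t) (q : Fin b) : (K').dist (Y j) (B q) = 2 := by
  rw [SimpleGraph.dist_comm]; exact distBY' q j

lemma distBA' (q : Fin b) (p : Fin a) : (K').dist (B q) (A p) = 2 :=
  dist_eq_two' (by simp) (by simp [adj_B_iff]) (adjBW q) (adjAX p).symm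

lemma distAB' (p : Fin a) (q : Fin b) : (K').dist (A p) (B q) = 2 := by
  rw [SimpleGraph.dist_comm]; exact distBA' q p

end Gprime

section G
variable {s t a b : ℕ} {xp : Fin s} {yq : Fin t}
local notation "KG" => KstPend2 s t a b xp (Sum.inr yq)
local notation "X" i => (Sum.inl (Sum.inl i) : (Fin s ⊕ Fin t) ⊕ (Fin a ⊕ Fin b))
local notation "Y" j => (Sum.inl (Sum.inr j) : (Fin s ⊕ Fin t) ⊕ (Fin a ⊕ Fin b))
local notation "A" p => (Sum.inr (Sum.inl p) : (Fin s ⊕ Fin t) ⊕ (Fin a ⊕ Fin b))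
local notation "B" q => (Sum.inr (Sum.inr q) : (Fin s ⊕ Fin t) ⊕ (Fin a ⊕ Fin b))

lemma distBY2 (i0 : Fin s) (q : Fin b) (j : Fin t) :
    (KG).dist (B q) (Y j) = if j = yq then 1 else 3 := by
  split
  · subst ‹j = yq›; exact SimpleGraph.dist_eq_one_iff_adj.mpr (adjBW q)
  · refine dist_eq_three' (by simp_all [adj_B_iff]) ?_ (adjBW q) (adjXY i0 yq).symm (adjXY i0 j)
    intro m hm
    rw [adj_B_iff] at hm; subst hm
    exact nadjYY yq j

lemma distYB2 (i0 : Fin s) (j : Fin t) (q : Fin b) :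
    (KG).dist (Y j) (B q) = if j = yq then 1 else 3 := by
  rw [SimpleGraph.dist_comm]; exact distBY2 i0 q j

lemma distBX2 (q : Fin b) (i : Fin s) : (KG).dist (B q) (X i) = 2 :=
  dist_eq_two' (by simp) (by simp [adj_B_iff]) (adjBW q) (adjXY i yq).symm

lemma distXB2 (i : Fin s) (q : Fin b) : (KG).dist (X i) (B q) = 2 := by
  rw [SimpleGraph.dist_comm]; exact distBX2 q i

lemma distBA2 (q : Fin b) (p : Fin a) : (KG).dist (B q) (A p) = 3 := by
  refine dist_eq_three' (by simp [adj_B_iff]) ?_ (adjBW q) (adjXY xp yq).symm (adjAX p).symm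
  intro m hm
  rw [adj_B_iff] at hm; subst hm
  intro h
  have := (adj_A_iff p _).mp h.symm
  simp at this

lemma distAB2 (p : Fin a) (q : Fin b) : (KG).dist (A p) (B q) = 3 := by
  rw [SimpleGraph.dist_comm]; exact distBA2 q p

end G

/-- Moving the `b` pendant edges from `y_q` (in the part of size `t`) to `x_p`
(in the part of size `s`, `2 ≤ s ≤ t`) strictly decreases the Wiener index. -/
theorem wiener_move_pendants_across (s t a b : ℕ) (hs : 2 ≤ s) (hst : s ≤ t)
    (ha : 1 ≤ a) (hb : 1 ≤ b) (xp : Fin s) (yq : Fin t) :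
    wiener (KstPend2 s t a b xp (Sum.inl xp)) < wiener (KstPend2 s t a b xp (Sum.inr yq)) := by
  have hs2 : (2:ℚ) ≤ (s:ℚ) := by exact_mod_cast hs
  have hst' : (s:ℚ) ≤ (t:ℚ) := by exact_mod_cast hst
  have ha' : (1:ℚ) ≤ (a:ℚ) := by exact_mod_cast ha
  have hb' : (1:ℚ) ≤ (b:ℚ) := by exact_mod_cast hb
  rw [wiener, wiener]
  have h2 : ∀ SL SR : ℚ, SL < SR → 1/2*SL < 1/2*SR := by intro _ _ h; linarith
  apply h2
  simp only [Fintype.sum_sum_type, distXX yq, distXY, distYX, distYY xp, distAA_s9,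
    distAX yq, distXA yq, distAY, distYA, distBB_s9, distBX' yq, distXB' yq, distBY', distYB',
    distBA', distAB', distBY2 xp, distYB2 xp, distBX2, distXB2, distBA2, distAB2,
    Nat.cast_ite, Nat.cast_ofNat, Nat.cast_one, Nat.cast_zero,
    Finset.sum_const, Finset.card_univ, Fintype.card_fin, nsmul_eq_mul, mul_ite, mul_zero,
    mul_one, sum_ite_fin, sum_ite_fin', Finset.sum_add_distrib]
  ring_nf
  nlinarith [mul_nonneg (by linarith : (0:ℚ) ≤ (b:ℚ)) (by linarith : (0:ℚ) ≤ (t:ℚ) - (s:ℚ)),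
    mul_pos (by linarith : (0:ℚ) < (a:ℚ)) (by linarith : (0:ℚ) < (b:ℚ)),
    mul_le_mul ha' hb' (by linarith) (by linarith : (0:ℚ) ≤ (a:ℚ))]
end

section
/- Let G be obtained from K_{s,t} (2 ≤ s ≤ t) by attaching a ≥ 1 pendent vertices to a vertex x_p in the part of size s and b ≥ 1 pendent vertices to a vertex y_q in the part of size t, and let G' be obtained by moving the b pendent edges from y_q to x_p. Then ξ^{ce}(G') − ξ^{ce}(G) = s(t−1)/6 > 0. -/
open Finset
open scoped Classical

namespace CeiAux

variable {V : Type*} {G : SimpleGraph V} {u v : V}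

lemma dist_le_one (h : G.Adj u v) : G.dist u v ≤ 1 := by
  simpa using SimpleGraph.dist_le h.toWalk

lemma dist_le_two {z : V} (h1 : G.Adj u z) (h2 : G.Adj z v) : G.dist u v ≤ 2 := by
  simpa using SimpleGraph.dist_le
    (SimpleGraph.Walk.cons h1 (SimpleGraph.Walk.cons h2 SimpleGraph.Walk.nil))

lemma dist_le_three {z z' : V} (h1 : G.Adj u z) (h2 : G.Adj z z') (h3 : G.Adj z' v) :
    G.dist u v ≤ 3 := by
  simpa using SimpleGraph.dist_le (SimpleGraph.Walk.cons h1
    (SimpleGraph.Walk.cons h2 (SimpleGraph.Walk.cons h3 SimpleGraph.Walk.nil)))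

lemma two_le_dist (hr : G.Reachable u v) (hne : u ≠ v) (hadj : ¬ G.Adj u v) :
    2 ≤ G.dist u v := by
  have h0 : G.dist u v ≠ 0 := SimpleGraph.dist_ne_zero_iff_ne_and_reachable.mpr ⟨hne, hr⟩
  have h1 : G.dist u v ≠ 1 := fun h => hadj (SimpleGraph.dist_eq_one_iff_adj.mp h)
  omega

lemma three_le_dist (hr : G.Reachable u v) (hne : u ≠ v) (hadj : ¬ G.Adj u v)
    (hcn : ∀ z, ¬ (G.Adj u z ∧ G.Adj z v)) : 3 ≤ G.dist u v := by
  have h2 := two_le_dist hr hne hadj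
  rcases Nat.lt_or_ge (G.dist u v) 3 with h | h
  · exfalso
    have hd : G.dist u v = 2 := by omega
    obtain ⟨p, hp⟩ := SimpleGraph.exists_walk_of_dist_ne_zero (G := G) (u := u) (v := v) (by omega)
    rw [hd] at hp
    cases p with
    | nil => simp at hp
    | cons h1 q =>
      cases q with
      | nil => simp at hp
      | cons hmid r =>
        cases r with
        | nil => exact hcn _ ⟨h1, hmid⟩
        | cons h3 r' => simp [SimpleGraph.Walk.length_cons] at hp
  · exact h

lemma ecc_eq [Fintype V] {n : ℕ} {u : V}
    (h1 : ∀ v, G.dist u v ≤ n) (v0 : V) (h2 : n ≤ G.dist u v0) :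
    ecc G u = n :=
  le_antisymm (Finset.sup_le fun v _ => h1 v)
    (le_trans h2 (Finset.le_sup (Finset.mem_univ v0)))

lemma deg_eq_sum {W : Type*} [Fintype W] (G : SimpleGraph W) (u : W) :
    G.degree u = ∑ v : W, if G.Adj u v then 1 else 0 := by
  classical
  rw [SimpleGraph.degree, SimpleGraph.neighborFinset_eq_filter, Finset.card_filter]

section Graphs

variable {s t a b : ℕ} {xp : Fin s} {w : Fin s ⊕ Fin t} {yq : Fin t}

local notation "vA" i => (Sum.inl (Sum.inl i) : (Fin s ⊕ Fin t) ⊕ (Fin a ⊕ Fin b))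
local notation "vB" j => (Sum.inl (Sum.inr j) : (Fin s ⊕ Fin t) ⊕ (Fin a ⊕ Fin b))
local notation "vP" p => (Sum.inr (Sum.inl p) : (Fin s ⊕ Fin t) ⊕ (Fin a ⊕ Fin b))
local notation "vQ" q => (Sum.inr (Sum.inr q) : (Fin s ⊕ Fin t) ⊕ (Fin a ⊕ Fin b))

@[simp] lemma adj_AA (i j : Fin s) : ¬ (KstPend2 s t a b xp w).Adj (vA i) (vA j) := by
  simp [KstPend2]
@[simp] lemma adj_AB (i : Fin s) (j : Fin t) : (KstPend2 s t a b xp w).Adj (vA i) (vB j) := by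
  simp [KstPend2]
@[simp] lemma adj_BA (j : Fin t) (i : Fin s) : (KstPend2 s t a b xp w).Adj (vB j) (vA i) :=
  (adj_AB i j).symm
@[simp] lemma adj_BB (j k : Fin t) : ¬ (KstPend2 s t a b xp w).Adj (vB j) (vB k) := by
  simp [KstPend2]
@[simp] lemma adj_AP (i : Fin s) (p : Fin a) :
    (KstPend2 s t a b xp w).Adj (vA i) (vP p) ↔ i = xp := by
  simp [KstPend2]
@[simp] lemma adj_PA (p : Fin a) (i : Fin s) :
    (KstPend2 s t a b xp w).Adj (vP p) (vA i) ↔ i = xp := by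
  rw [SimpleGraph.adj_comm]; exact adj_AP i p
@[simp] lemma adj_AQ (i : Fin s) (q : Fin b) :
    (KstPend2 s t a b xp w).Adj (vA i) (vQ q) ↔ w = Sum.inl i := by
  simp [KstPend2, eq_comm]
@[simp] lemma adj_QA (q : Fin b) (i : Fin s) :
    (KstPend2 s t a b xp w).Adj (vQ q) (vA i) ↔ w = Sum.inl i := by
  rw [SimpleGraph.adj_comm]; exact adj_AQ i q
@[simp] lemma adj_BP (j : Fin t) (p : Fin a) :
    ¬ (KstPend2 s t a b xp w).Adj (vB j) (vP p) := by
  simp [KstPend2]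
@[simp] lemma adj_PB (p : Fin a) (j : Fin t) :
    ¬ (KstPend2 s t a b xp w).Adj (vP p) (vB j) := by
  simp [KstPend2]
@[simp] lemma adj_BQ (j : Fin t) (q : Fin b) :
    (KstPend2 s t a b xp w).Adj (vB j) (vQ q) ↔ w = Sum.inr j := by
  simp [KstPend2, eq_comm]
@[simp] lemma adj_QB (q : Fin b) (j : Fin t) :
    (KstPend2 s t a b xp w).Adj (vQ q) (vB j) ↔ w = Sum.inr j := by
  rw [SimpleGraph.adj_comm]; exact adj_BQ j q
@[simp] lemma adj_PP (p p' : Fin a) : ¬ (KstPend2 s t a b xp w).Adj (vP p) (vP p') := by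
  simp [KstPend2]
@[simp] lemma adj_QQ (q q' : Fin b) : ¬ (KstPend2 s t a b xp w).Adj (vQ q) (vQ q') := by
  simp [KstPend2]
@[simp] lemma adj_PQ (p : Fin a) (q : Fin b) :
    ¬ (KstPend2 s t a b xp w).Adj (vP p) (vQ q) := by
  simp [KstPend2]
@[simp] lemma adj_QP (q : Fin b) (p : Fin a) :
    ¬ (KstPend2 s t a b xp w).Adj (vQ q) (vP p) := by
  simp [KstPend2]

lemma deg_A (i : Fin s) : (KstPend2 s t a b xp w).degree (vA i)
    = t + (if i = xp then a else 0) + (if w = Sum.inl i then b else 0) := by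
  rw [deg_eq_sum, Fintype.sum_sum_type, Fintype.sum_sum_type, Fintype.sum_sum_type]
  by_cases h1 : i = xp <;> by_cases h2 : w = Sum.inl i <;>
    subst_eqs <;>
    simp_all [KstPend2, eq_comm, Finset.card_univ] <;> omega

lemma deg_B (j : Fin t) : (KstPend2 s t a b xp w).degree (vB j)
    = s + (if w = Sum.inr j then b else 0) := by
  rw [deg_eq_sum, Fintype.sum_sum_type, Fintype.sum_sum_type, Fintype.sum_sum_type]
  by_cases h2 : w = Sum.inr j <;> simp [KstPend2, h2, eq_comm, Finset.card_univ]

lemma deg_P (p : Fin a) : (KstPend2 s t a b xp w).degree (vP p) = 1 := by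
  rw [deg_eq_sum, Fintype.sum_sum_type, Fintype.sum_sum_type, Fintype.sum_sum_type]
  simp [KstPend2, eq_comm, Finset.card_univ]

lemma deg_Q (q : Fin b) : (KstPend2 s t a b xp w).degree (vQ q) = 1 := by
  rw [deg_eq_sum, Fintype.sum_sum_type, Fintype.sum_sum_type, Fintype.sum_sum_type]
  cases w <;> simp [KstPend2, eq_comm, Finset.card_univ]

/-! ### Eccentricities in `G'` (all pendants at `x_p`, i.e. `w = Sum.inl xp`) -/

lemma eccA_xp' (hs : 2 ≤ s) (ht : 1 ≤ t) :
    ecc (KstPend2 s t a b xp (Sum.inl xp)) (vA xp) = 2 := by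
  obtain ⟨x0, hx0⟩ : ∃ x0 : Fin s, x0 ≠ xp :=
    Fintype.exists_ne_of_one_lt_card (by rw [Fintype.card_fin]; omega) xp
  have y0 : Fin t := ⟨0, ht⟩
  refine ecc_eq ?_ (vA x0) ?_
  · rintro ((i | j) | (p | q))
    · exact dist_le_two (adj_AB xp y0) (adj_BA y0 i)
    · exact (dist_le_one (adj_AB xp j)).trans (by norm_num)
    · exact (dist_le_one ((adj_AP xp p).mpr rfl)).trans (by norm_num)
    · exact (dist_le_one ((adj_AQ xp q).mpr rfl)).trans (by norm_num)
  · exact two_le_dist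
      (SimpleGraph.Walk.cons (adj_AB xp y0)
        (SimpleGraph.Walk.cons (adj_BA y0 x0) SimpleGraph.Walk.nil)).reachable
      (by simp [Ne.symm hx0]) (adj_AA xp x0)

lemma eccA_ne' (ht : 1 ≤ t) (hb : 1 ≤ b) (i : Fin s) (hi : i ≠ xp) :
    ecc (KstPend2 s t a b xp (Sum.inl xp)) (vA i) = 3 := by
  have y0 : Fin t := ⟨0, ht⟩
  have q0 : Fin b := ⟨0, hb⟩
  refine ecc_eq ?_ (vQ q0) ?_
  · rintro ((i' | j) | (p | q))
    · exact (dist_le_two (adj_AB i y0) (adj_BA y0 i')).trans (by norm_num)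
    · exact (dist_le_one (adj_AB i j)).trans (by norm_num)
    · exact dist_le_three (adj_AB i y0) (adj_BA y0 xp) ((adj_AP xp p).mpr rfl)
    · exact dist_le_three (adj_AB i y0) (adj_BA y0 xp) ((adj_AQ xp q).mpr rfl)
  · refine three_le_dist
      (SimpleGraph.Walk.cons (adj_AB i y0) (SimpleGraph.Walk.cons (adj_BA y0 xp)
        (SimpleGraph.Walk.cons ((adj_AQ xp q0).mpr rfl) SimpleGraph.Walk.nil))).reachable
      (by simp) (by simpa using Ne.symm hi) ?_
    rintro ((k | j) | (p | q)) ⟨h1, h2⟩ <;> simp_all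

lemma eccB' (hb : 1 ≤ b) (j : Fin t) :
    ecc (KstPend2 s t a b xp (Sum.inl xp)) (vB j) = 2 := by
  have q0 : Fin b := ⟨0, hb⟩
  refine ecc_eq ?_ (vQ q0) ?_
  · rintro ((i | k) | (p | q))
    · exact (dist_le_one (adj_BA j i)).trans (by norm_num)
    · exact dist_le_two (adj_BA j xp) (adj_AB xp k)
    · exact dist_le_two (adj_BA j xp) ((adj_AP xp p).mpr rfl)
    · exact dist_le_two (adj_BA j xp) ((adj_AQ xp q).mpr rfl)
  · exact two_le_dist
      (SimpleGraph.Walk.cons (adj_BA j xp)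
        (SimpleGraph.Walk.cons ((adj_AQ xp q0).mpr rfl) SimpleGraph.Walk.nil)).reachable
      (by simp) (by simp)

lemma eccP' (hs : 2 ≤ s) (ht : 1 ≤ t) (p : Fin a) :
    ecc (KstPend2 s t a b xp (Sum.inl xp)) (vP p) = 3 := by
  obtain ⟨x0, hx0⟩ : ∃ x0 : Fin s, x0 ≠ xp :=
    Fintype.exists_ne_of_one_lt_card (by rw [Fintype.card_fin]; omega) xp
  have y0 : Fin t := ⟨0, ht⟩
  refine ecc_eq ?_ (vA x0) ?_
  · rintro ((i | j) | (p' | q))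
    · exact dist_le_three ((adj_PA p xp).mpr rfl) (adj_AB xp y0) (adj_BA y0 i)
    · exact (dist_le_two ((adj_PA p xp).mpr rfl) (adj_AB xp j)).trans (by norm_num)
    · exact (dist_le_two ((adj_PA p xp).mpr rfl) ((adj_AP xp p').mpr rfl)).trans (by norm_num)
    · exact (dist_le_two ((adj_PA p xp).mpr rfl) ((adj_AQ xp q).mpr rfl)).trans (by norm_num)
  · refine three_le_dist
      (SimpleGraph.Walk.cons ((adj_PA p xp).mpr rfl) (SimpleGraph.Walk.cons (adj_AB xp y0)
        (SimpleGraph.Walk.cons (adj_BA y0 x0) SimpleGraph.Walk.nil))).reachable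
      (by simp) (by simp [hx0]) ?_
    rintro ((k | j) | (p' | q)) ⟨h1, h2⟩ <;> simp_all

lemma eccQ' (hs : 2 ≤ s) (ht : 1 ≤ t) (q : Fin b) :
    ecc (KstPend2 s t a b xp (Sum.inl xp)) (vQ q) = 3 := by
  obtain ⟨x0, hx0⟩ : ∃ x0 : Fin s, x0 ≠ xp :=
    Fintype.exists_ne_of_one_lt_card (by rw [Fintype.card_fin]; omega) xp
  have y0 : Fin t := ⟨0, ht⟩
  refine ecc_eq ?_ (vA x0) ?_
  · rintro ((i | j) | (p | q'))
    · exact dist_le_three ((adj_QA q xp).mpr rfl) (adj_AB xp y0) (adj_BA y0 i)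
    · exact (dist_le_two ((adj_QA q xp).mpr rfl) (adj_AB xp j)).trans (by norm_num)
    · exact (dist_le_two ((adj_QA q xp).mpr rfl) ((adj_AP xp p).mpr rfl)).trans (by norm_num)
    · exact (dist_le_two ((adj_QA q xp).mpr rfl) ((adj_AQ xp q').mpr rfl)).trans (by norm_num)
  · refine three_le_dist
      (SimpleGraph.Walk.cons ((adj_QA q xp).mpr rfl) (SimpleGraph.Walk.cons (adj_AB xp y0)
        (SimpleGraph.Walk.cons (adj_BA y0 x0) SimpleGraph.Walk.nil))).reachable
      (by simp) (by simp [Ne.symm hx0]) ?_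
    rintro ((k | j) | (p | q')) ⟨h1, h2⟩ <;> simp_all

/-! ### Eccentricities in `G` (pendants at `x_p` and `y_q`, i.e. `w = Sum.inr yq`) -/

lemma eccA_xpG (hs : 2 ≤ s) (ht : 1 ≤ t) :
    ecc (KstPend2 s t a b xp (Sum.inr yq)) (vA xp) = 2 := by
  obtain ⟨x0, hx0⟩ : ∃ x0 : Fin s, x0 ≠ xp :=
    Fintype.exists_ne_of_one_lt_card (by rw [Fintype.card_fin]; omega) xp
  have y0 : Fin t := ⟨0, ht⟩
  refine ecc_eq ?_ (vA x0) ?_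
  · rintro ((i | j) | (p | q))
    · exact dist_le_two (adj_AB xp y0) (adj_BA y0 i)
    · exact (dist_le_one (adj_AB xp j)).trans (by norm_num)
    · exact (dist_le_one ((adj_AP xp p).mpr rfl)).trans (by norm_num)
    · exact dist_le_two (adj_AB xp yq) ((adj_BQ yq q).mpr rfl)
  · exact two_le_dist
      (SimpleGraph.Walk.cons (adj_AB xp y0)
        (SimpleGraph.Walk.cons (adj_BA y0 x0) SimpleGraph.Walk.nil)).reachable
      (by simp [Ne.symm hx0]) (adj_AA xp x0)

lemma eccA_neG (ht : 1 ≤ t) (ha : 1 ≤ a) (i : Fin s) (hi : i ≠ xp) :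
    ecc (KstPend2 s t a b xp (Sum.inr yq)) (vA i) = 3 := by
  have y0 : Fin t := ⟨0, ht⟩
  have p0 : Fin a := ⟨0, ha⟩
  refine ecc_eq ?_ (vP p0) ?_
  · rintro ((i' | j) | (p | q))
    · exact (dist_le_two (adj_AB i y0) (adj_BA y0 i')).trans (by norm_num)
    · exact (dist_le_one (adj_AB i j)).trans (by norm_num)
    · exact dist_le_three (adj_AB i y0) (adj_BA y0 xp) ((adj_AP xp p).mpr rfl)
    · exact (dist_le_two (adj_AB i yq) ((adj_BQ yq q).mpr rfl)).trans (by norm_num)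
  · refine three_le_dist
      (SimpleGraph.Walk.cons (adj_AB i y0) (SimpleGraph.Walk.cons (adj_BA y0 xp)
        (SimpleGraph.Walk.cons ((adj_AP xp p0).mpr rfl) SimpleGraph.Walk.nil))).reachable
      (by simp) (by simpa using hi) ?_
    rintro ((k | j) | (p | q)) ⟨h1, h2⟩ <;> simp_all

lemma eccB_yqG (ha : 1 ≤ a) :
    ecc (KstPend2 s t a b xp (Sum.inr yq)) (vB yq) = 2 := by
  have p0 : Fin a := ⟨0, ha⟩
  refine ecc_eq ?_ (vP p0) ?_
  · rintro ((i | k) | (p | q))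
    · exact (dist_le_one (adj_BA yq i)).trans (by norm_num)
    · exact dist_le_two (adj_BA yq xp) (adj_AB xp k)
    · exact dist_le_two (adj_BA yq xp) ((adj_AP xp p).mpr rfl)
    · exact (dist_le_one ((adj_BQ yq q).mpr rfl)).trans (by norm_num)
  · exact two_le_dist
      (SimpleGraph.Walk.cons (adj_BA yq xp)
        (SimpleGraph.Walk.cons ((adj_AP xp p0).mpr rfl) SimpleGraph.Walk.nil)).reachable
      (by simp) (by simp)

lemma eccB_neG (hb : 1 ≤ b) (j : Fin t) (hj : j ≠ yq) :
    ecc (KstPend2 s t a b xp (Sum.inr yq)) (vB j) = 3 := by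
  have q0 : Fin b := ⟨0, hb⟩
  refine ecc_eq ?_ (vQ q0) ?_
  · rintro ((i | k) | (p | q))
    · exact (dist_le_one (adj_BA j i)).trans (by norm_num)
    · exact (dist_le_two (adj_BA j xp) (adj_AB xp k)).trans (by norm_num)
    · exact (dist_le_two (adj_BA j xp) ((adj_AP xp p).mpr rfl)).trans (by norm_num)
    · exact dist_le_three (adj_BA j xp) (adj_AB xp yq) ((adj_BQ yq q).mpr rfl)
  · refine three_le_dist
      (SimpleGraph.Walk.cons (adj_BA j xp) (SimpleGraph.Walk.cons (adj_AB xp yq)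
        (SimpleGraph.Walk.cons ((adj_BQ yq q0).mpr rfl) SimpleGraph.Walk.nil))).reachable
      (by simp) (by simpa using Ne.symm hj) ?_
    rintro ((k | j') | (p | q)) ⟨h1, h2⟩ <;> simp_all

lemma eccPG (hs : 2 ≤ s) (ht : 1 ≤ t) (p : Fin a) :
    ecc (KstPend2 s t a b xp (Sum.inr yq)) (vP p) = 3 := by
  obtain ⟨x0, hx0⟩ : ∃ x0 : Fin s, x0 ≠ xp :=
    Fintype.exists_ne_of_one_lt_card (by rw [Fintype.card_fin]; omega) xp
  have y0 : Fin t := ⟨0, ht⟩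
  refine ecc_eq ?_ (vA x0) ?_
  · rintro ((i | j) | (p' | q))
    · exact dist_le_three ((adj_PA p xp).mpr rfl) (adj_AB xp y0) (adj_BA y0 i)
    · exact (dist_le_two ((adj_PA p xp).mpr rfl) (adj_AB xp j)).trans (by norm_num)
    · exact (dist_le_two ((adj_PA p xp).mpr rfl) ((adj_AP xp p').mpr rfl)).trans (by norm_num)
    · exact dist_le_three ((adj_PA p xp).mpr rfl) (adj_AB xp yq) ((adj_BQ yq q).mpr rfl)
  · refine three_le_dist
      (SimpleGraph.Walk.cons ((adj_PA p xp).mpr rfl) (SimpleGraph.Walk.cons (adj_AB xp y0)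
        (SimpleGraph.Walk.cons (adj_BA y0 x0) SimpleGraph.Walk.nil))).reachable
      (by simp) (by simp [hx0]) ?_
    rintro ((k | j) | (p' | q)) ⟨h1, h2⟩ <;> simp_all

lemma eccQG (ha : 1 ≤ a) (q : Fin b) :
    ecc (KstPend2 s t a b xp (Sum.inr yq)) (vQ q) = 3 := by
  have p0 : Fin a := ⟨0, ha⟩
  refine ecc_eq ?_ (vP p0) ?_
  · rintro ((i | j) | (p | q'))
    · exact (dist_le_two ((adj_QB q yq).mpr rfl) (adj_BA yq i)).trans (by norm_num)
    · exact dist_le_three ((adj_QB q yq).mpr rfl) (adj_BA yq xp) (adj_AB xp j)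
    · exact dist_le_three ((adj_QB q yq).mpr rfl) (adj_BA yq xp) ((adj_AP xp p).mpr rfl)
    · exact (dist_le_two ((adj_QB q yq).mpr rfl) ((adj_BQ yq q').mpr rfl)).trans (by norm_num)
  · refine three_le_dist
      (SimpleGraph.Walk.cons ((adj_QB q yq).mpr rfl) (SimpleGraph.Walk.cons (adj_BA yq xp)
        (SimpleGraph.Walk.cons ((adj_AP xp p0).mpr rfl) SimpleGraph.Walk.nil))).reachable
      (by simp) (by simp) ?_
    rintro ((k | j) | (p' | q')) ⟨h1, h2⟩ <;> simp_all

end Graphs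

end CeiAux
namespace CeiAux
section Graphs
variable {s t a b : ℕ} {xp : Fin s} {w : Fin s ⊕ Fin t} {yq : Fin t}

local notation "vA" i => (Sum.inl (Sum.inl i) : (Fin s ⊕ Fin t) ⊕ (Fin a ⊕ Fin b))
local notation "vB" j => (Sum.inl (Sum.inr j) : (Fin s ⊕ Fin t) ⊕ (Fin a ⊕ Fin b))
local notation "vP" p => (Sum.inr (Sum.inl p) : (Fin s ⊕ Fin t) ⊕ (Fin a ⊕ Fin b))
local notation "vQ" q => (Sum.inr (Sum.inr q) : (Fin s ⊕ Fin t) ⊕ (Fin a ⊕ Fin b))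

lemma cei_K' (hs : 2 ≤ s) (hst : s ≤ t) (ha : 1 ≤ a) (hb : 1 ≤ b) :
    cei (KstPend2 s t a b xp (Sum.inl xp))
      = ((t:ℚ)+a+b)/2 + ((s:ℚ)-1)*((t:ℚ)/3) + (t:ℚ)*((s:ℚ)/2) + (a:ℚ)/3 + (b:ℚ)/3 := by
  have ht : 1 ≤ t := le_trans (by omega) hst
  rw [cei, Fintype.sum_sum_type, Fintype.sum_sum_type, Fintype.sum_sum_type]
  have hA : (∑ i : Fin s, ((KstPend2 s t a b xp (Sum.inl xp)).degree (vA i) : ℚ) /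
      (ecc (KstPend2 s t a b xp (Sum.inl xp)) (vA i) : ℚ))
      = ((t:ℚ)+a+b)/2 + ((s:ℚ)-1)*((t:ℚ)/3) := by
    rw [← Finset.add_sum_erase _ _ (Finset.mem_univ xp)]
    have e1 : ((KstPend2 s t a b xp (Sum.inl xp)).degree (vA xp) : ℚ) /
        (ecc (KstPend2 s t a b xp (Sum.inl xp)) (vA xp) : ℚ) = ((t:ℚ)+a+b)/2 := by
      rw [deg_A, eccA_xp' hs ht]
      simp only [if_pos rfl]
      push_cast
      ring
    have e2 : ∀ i ∈ Finset.univ.erase xp,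
        ((KstPend2 s t a b xp (Sum.inl xp)).degree (vA i) : ℚ) /
        (ecc (KstPend2 s t a b xp (Sum.inl xp)) (vA i) : ℚ) = (t:ℚ)/3 := by
      intro i hi
      have hi' : i ≠ xp := (Finset.mem_erase.mp hi).1
      rw [deg_A, eccA_ne' ht hb i hi']
      simp [hi', Ne.symm hi']
    rw [e1, Finset.sum_congr rfl e2, Finset.sum_const, Finset.card_erase_of_mem (Finset.mem_univ xp),
      Finset.card_univ, Fintype.card_fin, nsmul_eq_mul]
    push_cast [Nat.cast_sub (by omega : 1 ≤ s)]
    ring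
  have hB : (∑ j : Fin t, ((KstPend2 s t a b xp (Sum.inl xp)).degree (vB j) : ℚ) /
      (ecc (KstPend2 s t a b xp (Sum.inl xp)) (vB j) : ℚ)) = (t:ℚ)*((s:ℚ)/2) := by
    have e : ∀ j ∈ (Finset.univ : Finset (Fin t)),
        ((KstPend2 s t a b xp (Sum.inl xp)).degree (vB j) : ℚ) /
        (ecc (KstPend2 s t a b xp (Sum.inl xp)) (vB j) : ℚ) = (s:ℚ)/2 := by
      intro j _
      rw [deg_B, eccB' hb j]
      push_cast
      norm_num
    rw [Finset.sum_congr rfl e, Finset.sum_const, Finset.card_univ, Fintype.card_fin,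
      nsmul_eq_mul]
  have hP : (∑ p : Fin a, ((KstPend2 s t a b xp (Sum.inl xp)).degree (vP p) : ℚ) /
      (ecc (KstPend2 s t a b xp (Sum.inl xp)) (vP p) : ℚ)) = (a:ℚ)/3 := by
    have e : ∀ p ∈ (Finset.univ : Finset (Fin a)),
        ((KstPend2 s t a b xp (Sum.inl xp)).degree (vP p) : ℚ) /
        (ecc (KstPend2 s t a b xp (Sum.inl xp)) (vP p) : ℚ) = (1:ℚ)/3 := by
      intro p _
      rw [deg_P, eccP' hs ht p]
      norm_num
    rw [Finset.sum_congr rfl e, Finset.sum_const, Finset.card_univ, Fintype.card_fin,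
      nsmul_eq_mul]
    ring
  have hQ : (∑ q : Fin b, ((KstPend2 s t a b xp (Sum.inl xp)).degree (vQ q) : ℚ) /
      (ecc (KstPend2 s t a b xp (Sum.inl xp)) (vQ q) : ℚ)) = (b:ℚ)/3 := by
    have e : ∀ q ∈ (Finset.univ : Finset (Fin b)),
        ((KstPend2 s t a b xp (Sum.inl xp)).degree (vQ q) : ℚ) /
        (ecc (KstPend2 s t a b xp (Sum.inl xp)) (vQ q) : ℚ) = (1:ℚ)/3 := by
      intro q _
      rw [deg_Q, eccQ' hs ht q]
      norm_num
    rw [Finset.sum_congr rfl e, Finset.sum_const, Finset.card_univ, Fintype.card_fin,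
      nsmul_eq_mul]
    ring
  rw [hA, hB, hP, hQ]
  ring

lemma cei_KG (hs : 2 ≤ s) (hst : s ≤ t) (ha : 1 ≤ a) (hb : 1 ≤ b) :
    cei (KstPend2 s t a b xp (Sum.inr yq))
      = ((t:ℚ)+a)/2 + ((s:ℚ)-1)*((t:ℚ)/3) + ((s:ℚ)+b)/2 + ((t:ℚ)-1)*((s:ℚ)/3)
        + (a:ℚ)/3 + (b:ℚ)/3 := by
  have ht : 1 ≤ t := le_trans (by omega) hst
  rw [cei, Fintype.sum_sum_type, Fintype.sum_sum_type, Fintype.sum_sum_type]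
  have hA : (∑ i : Fin s, ((KstPend2 s t a b xp (Sum.inr yq)).degree (vA i) : ℚ) /
      (ecc (KstPend2 s t a b xp (Sum.inr yq)) (vA i) : ℚ))
      = ((t:ℚ)+a)/2 + ((s:ℚ)-1)*((t:ℚ)/3) := by
    rw [← Finset.add_sum_erase _ _ (Finset.mem_univ xp)]
    have e1 : ((KstPend2 s t a b xp (Sum.inr yq)).degree (vA xp) : ℚ) /
        (ecc (KstPend2 s t a b xp (Sum.inr yq)) (vA xp) : ℚ) = ((t:ℚ)+a)/2 := by
      rw [deg_A, eccA_xpG hs ht]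
      simp only [if_pos rfl, reduceIte, if_neg (by simp : ¬ (Sum.inr yq : Fin s ⊕ Fin t) = Sum.inl xp)]
      push_cast
      ring
    have e2 : ∀ i ∈ Finset.univ.erase xp,
        ((KstPend2 s t a b xp (Sum.inr yq)).degree (vA i) : ℚ) /
        (ecc (KstPend2 s t a b xp (Sum.inr yq)) (vA i) : ℚ) = (t:ℚ)/3 := by
      intro i hi
      have hi' : i ≠ xp := (Finset.mem_erase.mp hi).1
      rw [deg_A, eccA_neG ht ha i hi']
      simp [hi']
    rw [e1, Finset.sum_congr rfl e2, Finset.sum_const, Finset.card_erase_of_mem (Finset.mem_univ xp),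
      Finset.card_univ, Fintype.card_fin, nsmul_eq_mul]
    push_cast [Nat.cast_sub (by omega : 1 ≤ s)]
    ring
  have hB : (∑ j : Fin t, ((KstPend2 s t a b xp (Sum.inr yq)).degree (vB j) : ℚ) /
      (ecc (KstPend2 s t a b xp (Sum.inr yq)) (vB j) : ℚ))
      = ((s:ℚ)+b)/2 + ((t:ℚ)-1)*((s:ℚ)/3) := by
    rw [← Finset.add_sum_erase _ _ (Finset.mem_univ yq)]
    have e1 : ((KstPend2 s t a b xp (Sum.inr yq)).degree (vB yq) : ℚ) /
        (ecc (KstPend2 s t a b xp (Sum.inr yq)) (vB yq) : ℚ) = ((s:ℚ)+b)/2 := by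
      rw [deg_B, eccB_yqG ha]
      simp only [if_pos rfl]
      push_cast
      ring
    have e2 : ∀ j ∈ Finset.univ.erase yq,
        ((KstPend2 s t a b xp (Sum.inr yq)).degree (vB j) : ℚ) /
        (ecc (KstPend2 s t a b xp (Sum.inr yq)) (vB j) : ℚ) = (s:ℚ)/3 := by
      intro j hj
      have hj' : j ≠ yq := (Finset.mem_erase.mp hj).1
      rw [deg_B, eccB_neG hb j hj']
      simp [hj', Ne.symm hj']
    rw [e1, Finset.sum_congr rfl e2, Finset.sum_const, Finset.card_erase_of_mem (Finset.mem_univ yq),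
      Finset.card_univ, Fintype.card_fin, nsmul_eq_mul]
    push_cast [Nat.cast_sub (by omega : 1 ≤ t)]
    ring
  have hP : (∑ p : Fin a, ((KstPend2 s t a b xp (Sum.inr yq)).degree (vP p) : ℚ) /
      (ecc (KstPend2 s t a b xp (Sum.inr yq)) (vP p) : ℚ)) = (a:ℚ)/3 := by
    have e : ∀ p ∈ (Finset.univ : Finset (Fin a)),
        ((KstPend2 s t a b xp (Sum.inr yq)).degree (vP p) : ℚ) /
        (ecc (KstPend2 s t a b xp (Sum.inr yq)) (vP p) : ℚ) = (1:ℚ)/3 := by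
      intro p _
      rw [deg_P, eccPG hs ht p]
      norm_num
    rw [Finset.sum_congr rfl e, Finset.sum_const, Finset.card_univ, Fintype.card_fin,
      nsmul_eq_mul]
    ring
  have hQ : (∑ q : Fin b, ((KstPend2 s t a b xp (Sum.inr yq)).degree (vQ q) : ℚ) /
      (ecc (KstPend2 s t a b xp (Sum.inr yq)) (vQ q) : ℚ)) = (b:ℚ)/3 := by
    have e : ∀ q ∈ (Finset.univ : Finset (Fin b)),
        ((KstPend2 s t a b xp (Sum.inr yq)).degree (vQ q) : ℚ) /
        (ecc (KstPend2 s t a b xp (Sum.inr yq)) (vQ q) : ℚ) = (1:ℚ)/3 := by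
      intro q _
      rw [deg_Q, eccQG ha q]
      norm_num
    rw [Finset.sum_congr rfl e, Finset.sum_const, Finset.card_univ, Fintype.card_fin,
      nsmul_eq_mul]
    ring
  rw [hA, hB, hP, hQ]
  ring

end Graphs
end CeiAux

/-- Moving the `b` pendant edges from `y_q` (in the part of size `t`) to `x_p`
(in the part of size `s`, `2 ≤ s ≤ t`) increases the connective eccentricity index
by exactly `s(t-1)/6 > 0`. -/
theorem cei_move_pendants_across (s t a b : ℕ) (hs : 2 ≤ s) (hst : s ≤ t)
    (ha : 1 ≤ a) (hb : 1 ≤ b) (xp : Fin s) (yq : Fin t) :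
    cei (KstPend2 s t a b xp (Sum.inl xp)) - cei (KstPend2 s t a b xp (Sum.inr yq))
        = (s : ℚ) * ((t : ℚ) - 1) / 6 ∧
      (0 : ℚ) < (s : ℚ) * ((t : ℚ) - 1) / 6 := by
  have hs' : (2:ℚ) ≤ (s:ℚ) := by exact_mod_cast hs
  have hst' : (s:ℚ) ≤ (t:ℚ) := by exact_mod_cast hst
  constructor
  · rw [CeiAux.cei_K' hs hst ha hb, CeiAux.cei_KG hs hst ha hb]
    ring
  · apply div_pos (mul_pos (by linarith) (by linarith))
    norm_num
end

section
/- For positive integers n, k, x with 2 ≤ x ≤ n−k−x, the hyper-Wiener index of B_k(x, n−k−x) equals 2x² + (5k−2n)x + (3/2)n² − (3/2)n − 5k. -/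
open Finset
open scoped Classical

/-- `Bgraph x y k w`: the bipartite graph obtained from the complete bipartite graph
`K_{x,y}` (parts `Fin x` and `Fin y`) by attaching `k` pendant vertices to the vertex `w`
of the part of size `x`. With `y = n - k - x` this is the graph `B_k(x, n-k-x)`. -/
def Bgraph (x y k : ℕ) (w : Fin x) : SimpleGraph ((Fin x ⊕ Fin y) ⊕ Fin k) :=
  SimpleGraph.fromRel (fun p q =>
    (∃ i j, p = Sum.inl (Sum.inl i) ∧ q = Sum.inl (Sum.inr j)) ∨
    (∃ m, p = Sum.inr m ∧ q = Sum.inl (Sum.inl w)))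

section BgraphAux

variable {x y k : ℕ} {w : Fin x}

lemma Badj_AB (i : Fin x) (j : Fin y) :
    (Bgraph x y k w).Adj (Sum.inl (Sum.inl i)) (Sum.inl (Sum.inr j)) := by
  rw [Bgraph, SimpleGraph.fromRel_adj]
  exact ⟨by simp, Or.inl (Or.inl ⟨i, j, rfl, rfl⟩)⟩

lemma Badj_Pw (m : Fin k) :
    (Bgraph x y k w).Adj (Sum.inr m) (Sum.inl (Sum.inl w)) := by
  rw [Bgraph, SimpleGraph.fromRel_adj]
  exact ⟨by simp, Or.inl (Or.inr ⟨m, rfl, rfl⟩)⟩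

lemma not_adj_AA (i j : Fin x) :
    ¬ (Bgraph x y k w).Adj (Sum.inl (Sum.inl i)) (Sum.inl (Sum.inl j)) := by
  simp [Bgraph, SimpleGraph.fromRel_adj]

lemma not_adj_BB (i j : Fin y) :
    ¬ (Bgraph x y k w).Adj (Sum.inl (Sum.inr i)) (Sum.inl (Sum.inr j)) := by
  simp [Bgraph, SimpleGraph.fromRel_adj]

lemma not_adj_PB (m : Fin k) (j : Fin y) :
    ¬ (Bgraph x y k w).Adj (Sum.inr m) (Sum.inl (Sum.inr j)) := by
  simp [Bgraph, SimpleGraph.fromRel_adj]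

lemma not_adj_PP (m m' : Fin k) :
    ¬ (Bgraph x y k w).Adj (Sum.inr m) (Sum.inr m') := by
  simp [Bgraph, SimpleGraph.fromRel_adj]

lemma adj_inr_eq {m : Fin k} {z} (h : (Bgraph x y k w).Adj (Sum.inr m) z) :
    z = Sum.inl (Sum.inl w) := by
  rw [Bgraph, SimpleGraph.fromRel_adj] at h
  rcases h with ⟨-, h | h⟩ <;> rcases h with ⟨a, b, h1, h2⟩ | ⟨a, h1, h2⟩ <;> simp_all

open SimpleGraph in
lemma mid_of_dist_eq_two {V : Type*} {G : SimpleGraph V} {u v : V}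
    (h : G.dist u v = 2) : ∃ z, G.Adj u z ∧ G.Adj z v := by
  have hr : G.Reachable u v := SimpleGraph.Reachable.of_dist_ne_zero (by omega)
  obtain ⟨p, hp⟩ := hr.exists_walk_length_eq_dist
  rw [h] at hp
  cases p with
  | nil => simp at hp
  | cons h1 q =>
    cases q with
    | nil => simp at hp
    | cons h2 r =>
      cases r with
      | nil => exact ⟨_, h1, h2⟩
      | cons h3 s => simp [SimpleGraph.Walk.length_cons] at hp

lemma distAB_s12 (i : Fin x) (j : Fin y) :
    (Bgraph x y k w).dist (Sum.inl (Sum.inl i)) (Sum.inl (Sum.inr j)) = 1 :=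
  SimpleGraph.dist_eq_one_iff_adj.mpr (Badj_AB i j)

lemma distAA_s12 (hy : 0 < y) {i j : Fin x} (h : i ≠ j) :
    (Bgraph x y k w).dist (Sum.inl (Sum.inl i)) (Sum.inl (Sum.inl j)) = 2 := by
  set b : Fin y := ⟨0, hy⟩
  let p : (Bgraph x y k w).Walk (Sum.inl (Sum.inl i)) (Sum.inl (Sum.inl j)) :=
    .cons (Badj_AB i b) (.cons (Badj_AB j b).symm .nil)
  have hle := SimpleGraph.dist_le p
  rw [show p.length = 2 from rfl] at hle
  have h0 : (Bgraph x y k w).dist (Sum.inl (Sum.inl i)) (Sum.inl (Sum.inl j)) ≠ 0 := by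
    rw [ne_eq, SimpleGraph.Reachable.dist_eq_zero_iff ⟨p⟩]
    simp [h]
  have h1 : (Bgraph x y k w).dist (Sum.inl (Sum.inl i)) (Sum.inl (Sum.inl j)) ≠ 1 := by
    intro hc
    exact not_adj_AA i j (SimpleGraph.dist_eq_one_iff_adj.mp hc)
  omega

lemma distBB_s12 (hx : 0 < x) {i j : Fin y} (h : i ≠ j) :
    (Bgraph x y k w).dist (Sum.inl (Sum.inr i)) (Sum.inl (Sum.inr j)) = 2 := by
  set a : Fin x := ⟨0, hx⟩
  let p : (Bgraph x y k w).Walk (Sum.inl (Sum.inr i)) (Sum.inl (Sum.inr j)) :=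
    .cons (Badj_AB a i).symm (.cons (Badj_AB a j) .nil)
  have hle := SimpleGraph.dist_le p
  rw [show p.length = 2 from rfl] at hle
  have h0 : (Bgraph x y k w).dist (Sum.inl (Sum.inr i)) (Sum.inl (Sum.inr j)) ≠ 0 := by
    rw [ne_eq, SimpleGraph.Reachable.dist_eq_zero_iff ⟨p⟩]
    simp [h]
  have h1 : (Bgraph x y k w).dist (Sum.inl (Sum.inr i)) (Sum.inl (Sum.inr j)) ≠ 1 := by
    intro hc
    exact not_adj_BB i j (SimpleGraph.dist_eq_one_iff_adj.mp hc)
  omega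

lemma distPw (m : Fin k) :
    (Bgraph x y k w).dist (Sum.inr m) (Sum.inl (Sum.inl w)) = 1 :=
  SimpleGraph.dist_eq_one_iff_adj.mpr (Badj_Pw m)

lemma distPB_s12 (m : Fin k) (j : Fin y) :
    (Bgraph x y k w).dist (Sum.inr m) (Sum.inl (Sum.inr j)) = 2 := by
  let p : (Bgraph x y k w).Walk (Sum.inr m) (Sum.inl (Sum.inr j)) :=
    .cons (Badj_Pw m) (.cons (Badj_AB w j) .nil)
  have hle := SimpleGraph.dist_le p
  rw [show p.length = 2 from rfl] at hle
  have h0 : (Bgraph x y k w).dist (Sum.inr m) (Sum.inl (Sum.inr j)) ≠ 0 := by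
    rw [ne_eq, SimpleGraph.Reachable.dist_eq_zero_iff ⟨p⟩]
    simp
  have h1 : (Bgraph x y k w).dist (Sum.inr m) (Sum.inl (Sum.inr j)) ≠ 1 := by
    intro hc
    exact not_adj_PB m j (SimpleGraph.dist_eq_one_iff_adj.mp hc)
  omega

lemma distPP_s12 {m m' : Fin k} (h : m ≠ m') :
    (Bgraph x y k w).dist (Sum.inr m) (Sum.inr m') = 2 := by
  let p : (Bgraph x y k w).Walk (Sum.inr m) (Sum.inr m') :=
    .cons (Badj_Pw m) (.cons (Badj_Pw m').symm .nil)
  have hle := SimpleGraph.dist_le p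
  rw [show p.length = 2 from rfl] at hle
  have h0 : (Bgraph x y k w).dist (Sum.inr m) (Sum.inr m') ≠ 0 := by
    rw [ne_eq, SimpleGraph.Reachable.dist_eq_zero_iff ⟨p⟩]
    simp [h]
  have h1 : (Bgraph x y k w).dist (Sum.inr m) (Sum.inr m') ≠ 1 := by
    intro hc
    exact not_adj_PP m m' (SimpleGraph.dist_eq_one_iff_adj.mp hc)
  omega

lemma distPA_s12 (hy : 0 < y) (m : Fin k) {a : Fin x} (h : a ≠ w) :
    (Bgraph x y k w).dist (Sum.inr m) (Sum.inl (Sum.inl a)) = 3 := by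
  set b : Fin y := ⟨0, hy⟩
  let p : (Bgraph x y k w).Walk (Sum.inr m) (Sum.inl (Sum.inl a)) :=
    .cons (Badj_Pw m) (.cons (Badj_AB w b) (.cons (Badj_AB a b).symm .nil))
  have hle := SimpleGraph.dist_le p
  rw [show p.length = 3 from rfl] at hle
  have h0 : (Bgraph x y k w).dist (Sum.inr m) (Sum.inl (Sum.inl a)) ≠ 0 := by
    rw [ne_eq, SimpleGraph.Reachable.dist_eq_zero_iff ⟨p⟩]
    simp
  have h1 : (Bgraph x y k w).dist (Sum.inr m) (Sum.inl (Sum.inl a)) ≠ 1 := by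
    intro hc
    have := adj_inr_eq (SimpleGraph.dist_eq_one_iff_adj.mp hc)
    simp at this
    exact h this
  have h2 : (Bgraph x y k w).dist (Sum.inr m) (Sum.inl (Sum.inl a)) ≠ 2 := by
    intro hc
    obtain ⟨z, hz1, hz2⟩ := mid_of_dist_eq_two hc
    rw [adj_inr_eq hz1] at hz2
    exact not_adj_AA w a hz2
  omega


end BgraphAux

lemma sum_if_eq {α : Type*} [Fintype α] [DecidableEq α] (i : α) (c d : ℚ) :
    ∑ j : α, (if i = j then c else d) = c + d * (Fintype.card α - 1) := by
  have h : ∀ j : α, (if i = j then c else d) = d + (if i = j then c - d else 0) := by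
    intro j; split <;> ring
  simp only [h, Finset.sum_add_distrib, Finset.sum_const, Finset.sum_ite_eq,
    Finset.mem_univ, if_true, Finset.card_univ, nsmul_eq_mul]
  ring

/-- Hyper-Wiener index of `B_k(x, n-k-x)` (here `y = n - k - x`). -/
theorem hyperWiener_Bgraph (n k x y : ℕ) (hn : n = x + y + k) (hk : 1 ≤ k)
    (hx : 2 ≤ x) (hxy : x ≤ y) (w : Fin x) :
    hyperWiener (Bgraph x y k w)
      = 2 * (x : ℚ)^2 + (5 * (k : ℚ) - 2 * n) * x
          + (3/2) * (n : ℚ)^2 - (3/2) * n - 5 * k := by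
  have hy : 0 < y := lt_of_lt_of_le (by omega) hxy
  have hx0 : 0 < x := by omega
  set G := Bgraph x y k w with hG
  have hAA : ∀ i : Fin x, ∑ j : Fin x,
      ((G.dist (Sum.inl (Sum.inl i)) (Sum.inl (Sum.inl j)) : ℚ)
        + (G.dist (Sum.inl (Sum.inl i)) (Sum.inl (Sum.inl j)) : ℚ)^2) = 6*x - 6 := by
    intro i
    have hpt : ∀ j : Fin x, ((G.dist (Sum.inl (Sum.inl i)) (Sum.inl (Sum.inl j)) : ℚ)
        + (G.dist (Sum.inl (Sum.inl i)) (Sum.inl (Sum.inl j)) : ℚ)^2)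
        = if i = j then 0 else 6 := by
      intro j
      by_cases h : i = j
      · subst h; simp [hG, SimpleGraph.dist_self]
      · rw [hG, distAA_s12 hy h, if_neg h]; norm_num
    rw [Finset.sum_congr rfl fun j _ => hpt j, sum_if_eq]
    simp; ring
  have hAB : ∀ i : Fin x, ∑ j : Fin y,
      ((G.dist (Sum.inl (Sum.inl i)) (Sum.inl (Sum.inr j)) : ℚ)
        + (G.dist (Sum.inl (Sum.inl i)) (Sum.inl (Sum.inr j)) : ℚ)^2) = 2*y := by
    intro i
    have hpt : ∀ j : Fin y, ((G.dist (Sum.inl (Sum.inl i)) (Sum.inl (Sum.inr j)) : ℚ)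
        + (G.dist (Sum.inl (Sum.inl i)) (Sum.inl (Sum.inr j)) : ℚ)^2) = 2 := by
      intro j; rw [hG, distAB_s12]; norm_num
    rw [Finset.sum_congr rfl fun j _ => hpt j, Finset.sum_const]
    simp; ring
  have hAP : ∀ i : Fin x, ∑ m : Fin k,
      ((G.dist (Sum.inl (Sum.inl i)) (Sum.inr m) : ℚ)
        + (G.dist (Sum.inl (Sum.inl i)) (Sum.inr m) : ℚ)^2)
      = if w = i then 2*(k:ℚ) else 12*(k:ℚ) := by
    intro i
    by_cases h : w = i
    · subst h
      have hpt : ∀ m : Fin k, ((G.dist (Sum.inl (Sum.inl w)) (Sum.inr m) : ℚ)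
          + (G.dist (Sum.inl (Sum.inl w)) (Sum.inr m) : ℚ)^2) = 2 := by
        intro m; rw [hG, SimpleGraph.dist_comm, distPw]; norm_num
      rw [Finset.sum_congr rfl fun m _ => hpt m, Finset.sum_const, if_pos rfl]
      simp; ring
    · have hpt : ∀ m : Fin k, ((G.dist (Sum.inl (Sum.inl i)) (Sum.inr m) : ℚ)
          + (G.dist (Sum.inl (Sum.inl i)) (Sum.inr m) : ℚ)^2) = 12 := by
        intro m
        rw [hG, SimpleGraph.dist_comm, distPA_s12 hy m (fun hc => h hc.symm)]; norm_num
      rw [Finset.sum_congr rfl fun m _ => hpt m, Finset.sum_const, if_neg h]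
      simp; ring
  have hBA : ∀ j : Fin y, ∑ i : Fin x,
      ((G.dist (Sum.inl (Sum.inr j)) (Sum.inl (Sum.inl i)) : ℚ)
        + (G.dist (Sum.inl (Sum.inr j)) (Sum.inl (Sum.inl i)) : ℚ)^2) = 2*x := by
    intro j
    have hpt : ∀ i : Fin x, ((G.dist (Sum.inl (Sum.inr j)) (Sum.inl (Sum.inl i)) : ℚ)
        + (G.dist (Sum.inl (Sum.inr j)) (Sum.inl (Sum.inl i)) : ℚ)^2) = 2 := by
      intro i; rw [hG, SimpleGraph.dist_comm, distAB_s12]; norm_num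
    rw [Finset.sum_congr rfl fun i _ => hpt i, Finset.sum_const]
    simp; ring
  have hBB : ∀ i : Fin y, ∑ j : Fin y,
      ((G.dist (Sum.inl (Sum.inr i)) (Sum.inl (Sum.inr j)) : ℚ)
        + (G.dist (Sum.inl (Sum.inr i)) (Sum.inl (Sum.inr j)) : ℚ)^2) = 6*y - 6 := by
    intro i
    have hpt : ∀ j : Fin y, ((G.dist (Sum.inl (Sum.inr i)) (Sum.inl (Sum.inr j)) : ℚ)
        + (G.dist (Sum.inl (Sum.inr i)) (Sum.inl (Sum.inr j)) : ℚ)^2)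
        = if i = j then 0 else 6 := by
      intro j
      by_cases h : i = j
      · subst h; simp [hG, SimpleGraph.dist_self]
      · rw [hG, distBB_s12 hx0 h, if_neg h]; norm_num
    rw [Finset.sum_congr rfl fun j _ => hpt j, sum_if_eq]
    simp; ring
  have hBP : ∀ j : Fin y, ∑ m : Fin k,
      ((G.dist (Sum.inl (Sum.inr j)) (Sum.inr m) : ℚ)
        + (G.dist (Sum.inl (Sum.inr j)) (Sum.inr m) : ℚ)^2) = 6*k := by
    intro j
    have hpt : ∀ m : Fin k, ((G.dist (Sum.inl (Sum.inr j)) (Sum.inr m) : ℚ)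
        + (G.dist (Sum.inl (Sum.inr j)) (Sum.inr m) : ℚ)^2) = 6 := by
      intro m; rw [hG, SimpleGraph.dist_comm, distPB_s12]; norm_num
    rw [Finset.sum_congr rfl fun m _ => hpt m, Finset.sum_const]
    simp; ring
  have hPA : ∀ m : Fin k, ∑ i : Fin x,
      ((G.dist (Sum.inr m) (Sum.inl (Sum.inl i)) : ℚ)
        + (G.dist (Sum.inr m) (Sum.inl (Sum.inl i)) : ℚ)^2) = 12*x - 10 := by
    intro m
    have hpt : ∀ i : Fin x, ((G.dist (Sum.inr m) (Sum.inl (Sum.inl i)) : ℚ)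
        + (G.dist (Sum.inr m) (Sum.inl (Sum.inl i)) : ℚ)^2)
        = if w = i then 2 else 12 := by
      intro i
      by_cases h : w = i
      · subst h; rw [hG, distPw, if_pos rfl]; norm_num
      · rw [hG, distPA_s12 hy m (fun hc => h hc.symm), if_neg h]; norm_num
    rw [Finset.sum_congr rfl fun i _ => hpt i, sum_if_eq]
    simp; ring
  have hPB : ∀ m : Fin k, ∑ j : Fin y,
      ((G.dist (Sum.inr m) (Sum.inl (Sum.inr j)) : ℚ)
        + (G.dist (Sum.inr m) (Sum.inl (Sum.inr j)) : ℚ)^2) = 6*y := by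
    intro m
    have hpt : ∀ j : Fin y, ((G.dist (Sum.inr m) (Sum.inl (Sum.inr j)) : ℚ)
        + (G.dist (Sum.inr m) (Sum.inl (Sum.inr j)) : ℚ)^2) = 6 := by
      intro j; rw [hG, distPB_s12]; norm_num
    rw [Finset.sum_congr rfl fun j _ => hpt j, Finset.sum_const]
    simp; ring
  have hPP : ∀ m : Fin k, ∑ m' : Fin k,
      ((G.dist (Sum.inr m) (Sum.inr m') : ℚ)
        + (G.dist (Sum.inr m) (Sum.inr m') : ℚ)^2) = 6*k - 6 := by
    intro m
    have hpt : ∀ m' : Fin k, ((G.dist (Sum.inr m) (Sum.inr m') : ℚ)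
        + (G.dist (Sum.inr m) (Sum.inr m') : ℚ)^2)
        = if m = m' then 0 else 6 := by
      intro m'
      by_cases h : m = m'
      · subst h; simp [hG, SimpleGraph.dist_self]
      · rw [hG, distPP_s12 h, if_neg h]; norm_num
    rw [Finset.sum_congr rfl fun m' _ => hpt m', sum_if_eq]
    simp; ring
  rw [hyperWiener]
  simp only [Fintype.sum_sum_type]
  simp only [hAA, hAB, hAP, hBA, hBB, hBP, hPA, hPB, hPP]
  simp only [Finset.sum_add_distrib, Finset.sum_const, Finset.card_univ, Fintype.card_fin,
    nsmul_eq_mul, sum_if_eq]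
  rw [hn]
  push_cast
  ring
end
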